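/- arXiv:1807.01551 — 7 statements merged into one kernel-verified Lean document; each statement's English description precedes it below -/
import Mathlib

section
/- Let X be a simplicial complex on a vertex set V of size n, all of whose missing faces have dimension at most d. Then for every k ≥ -1, the minimal eigenvalue μ_k(X) of the reduced k-dimensional Laplacian of X satisfies μ_k(X) ≥ (d+1)(δ_k + k + 1) − d·n, where δ_k is the minimal degree of a k-dimensional simplex of X. -/
open Matrix BigOperators

/-- A finite abstract simplicial complex on vertex type `V` (the empty face is included). -/
structure SC (V : Type) [DecidableEq V] where
  faces : Finset (Finset V)
  empty_mem : ∅ ∈ faces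
  down_closed : ∀ σ ∈ faces, ∀ τ ⊆ σ, τ ∈ faces

namespace SC

variable {V : Type} [Fintype V] [DecidableEq V] [LinearOrder V] (X : SC V)

/-- The degree of a simplex: the number of cofacets. -/
def deg (σ : Finset V) : ℕ :=
  (X.faces.filter fun η => σ ⊆ η ∧ η.card = σ.card + 1).card

/-- Faces with `m` vertices, i.e. of dimension `m - 1`. -/
abbrev face (m : ℕ) := {σ : Finset V // σ ∈ X.faces ∧ σ.card = m}

/-- `sgn σ τ` for `τ ⊆ σ` with `|σ \ τ| = 1`: the sign `(-1)^i` where `i` is the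
position of the vertex of `σ \ τ` in the increasing ordering of `σ`. -/
def sgn (σ τ : Finset V) : ℝ :=
  ∑ u ∈ σ \ τ, (-1 : ℝ) ^ (σ.filter fun w => w < u).card

/-- The matrix of the simplicial coboundary map from `(m-1)`-cochains to `m`-cochains
(cochains are indexed by the number of vertices of the faces). -/
def CB (m : ℕ) : Matrix (X.face (m + 1)) (X.face m) ℝ :=
  fun σ τ => if τ.1 ⊆ σ.1 then sgn σ.1 τ.1 else 0

/-- The reduced Laplacian `L_{m-1} = d_{m-2} ∂_{m-2} + ∂_{m-1} d_{m-1}` acting on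
cochains supported on faces with `m` vertices. -/
def Lap : (m : ℕ) → Matrix (X.face m) (X.face m) ℝ
  | 0 => (X.CB 0)ᵀ * X.CB 0
  | m + 1 => (X.CB (m + 1))ᵀ * X.CB (m + 1) + X.CB m * (X.CB m)ᵀ

/-- The set of eigenvalues of the reduced Laplacian `L_{m-1}`. -/
def eigenvals (m : ℕ) : Set ℝ :=
  {μ | Module.End.HasEigenvalue (Matrix.toLin' (X.Lap m)) μ}

/-- The spectrum of the reduced Laplacian `L_{m-1}` as a multiset (roots of the
characteristic polynomial with multiplicity). -/
noncomputable def spec (m : ℕ) : Multiset ℝ := (X.Lap m).charpoly.roots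

/-- The set of degrees of faces with `m` vertices. -/
def degSet (m : ℕ) : Set ℕ := {N | ∃ σ ∈ X.faces, σ.card = m ∧ X.deg σ = N}

/-- All missing faces of `X` have dimension at most `d` (at most `d + 1` vertices). -/
def MissingBnd (d : ℕ) : Prop :=
  ∀ σ : Finset V, σ ∉ X.faces → (∀ τ ⊂ σ, τ ∈ X.faces) → σ.card ≤ d + 1

/-- `X` is a clique (flag) complex: any set of pairwise connected vertices is a face. -/
def Flag : Prop :=
  ∀ σ : Finset V, (∀ u ∈ σ, ∀ v ∈ σ, ({u, v} : Finset V) ∈ X.faces) → σ ∈ X.faces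

/-- `φ` is a coboundary (an element of the image of the coboundary map). -/
def IsCobound : (m : ℕ) → (X.face m → ℝ) → Prop
  | 0, φ => φ = 0
  | m + 1, φ => ∃ ψ : X.face m → ℝ, (X.CB m).mulVec ψ = φ

/-- The reduced cohomology with real coefficients vanishes in dimension `m - 1`:
every cocycle is a coboundary. -/
def Hvanish (m : ℕ) : Prop :=
  ∀ φ : X.face m → ℝ, (X.CB m).mulVec φ = 0 → X.IsCobound m φ

end SC


namespace SCaux

open Finset

variable {V : Type} [DecidableEq V] [LinearOrder V]

lemma sgn_insert_eq {u : V} {s : Finset V} (h : u ∉ s) :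
    SC.sgn (insert u s) s = (-1 : ℝ) ^ (s.filter fun w => w < u).card := by
  have hd : insert u s \ s = {u} := by
    ext x
    simp only [Finset.mem_sdiff, Finset.mem_insert, Finset.mem_singleton]
    constructor
    · rintro ⟨h1 | h1, h2⟩ <;> tauto
    · rintro rfl; exact ⟨Or.inl rfl, h⟩
  rw [SC.sgn, hd, Finset.sum_singleton, Finset.filter_insert]
  simp [lt_irrefl]

omit [LinearOrder V] in
lemma exists_eq_insert {τ σ : Finset V} (hsub : τ ⊆ σ) (hc : σ.card = τ.card + 1) :
    ∃ u, u ∉ τ ∧ σ = insert u τ := by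
  have h1 : (σ \ τ).card = 1 := by rw [Finset.card_sdiff_of_subset hsub]; omega
  obtain ⟨u, hu⟩ := Finset.card_eq_one.mp h1
  have hu' : u ∈ σ \ τ := hu ▸ Finset.mem_singleton_self u
  have huσ : u ∈ σ := (Finset.mem_sdiff.mp hu').1
  have huτ : u ∉ τ := (Finset.mem_sdiff.mp hu').2
  refine ⟨u, huτ, ?_⟩
  refine (Finset.eq_of_subset_of_card_le ?_ ?_).symm
  · exact Finset.insert_subset huσ hsub
  · rw [Finset.card_insert_of_notMem huτ, hc]

lemma sgn_abs {τ σ : Finset V} (hsub : τ ⊆ σ) (hc : σ.card = τ.card + 1) :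
    |SC.sgn σ τ| = 1 := by
  obtain ⟨u, hu, rfl⟩ := exists_eq_insert hsub hc
  rw [sgn_insert_eq hu, abs_pow, abs_neg, abs_one, one_pow]

lemma sgn_sq {τ σ : Finset V} (hsub : τ ⊆ σ) (hc : σ.card = τ.card + 1) :
    SC.sgn σ τ * SC.sgn σ τ = 1 := by
  rw [← sq, ← sq_abs, sgn_abs hsub hc, one_pow]

lemma sgn_cancel_lt {a b : V} {ρ : Finset V} (hab : a < b) (ha : a ∉ ρ) (hb : b ∉ ρ) :
    SC.sgn (insert a (insert b ρ)) (insert a ρ) * SC.sgn (insert a (insert b ρ)) (insert b ρ)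
      + SC.sgn (insert a ρ) ρ * SC.sgn (insert b ρ) ρ = 0 := by
  have hne : a ≠ b := ne_of_lt hab
  have hbmem : b ∉ insert a ρ := by simp [Finset.mem_insert, hne.symm, hb]
  have hamem : a ∉ insert b ρ := by simp [Finset.mem_insert, hne, ha]
  have e1 : insert a (insert b ρ) = insert b (insert a ρ) := Finset.insert_comm a b ρ
  rw [e1, sgn_insert_eq hbmem, ← e1, sgn_insert_eq hamem, sgn_insert_eq ha, sgn_insert_eq hb]
  have e2 : ((insert a ρ).filter fun w => w < b) = insert a (ρ.filter fun w => w < b) := by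
    rw [Finset.filter_insert, if_pos hab]
  have e3 : ((insert b ρ).filter fun w => w < a) = ρ.filter fun w => w < a := by
    rw [Finset.filter_insert, if_neg (not_lt.mpr hab.le)]
  have ha' : a ∉ ρ.filter fun w => w < b := fun h => ha (Finset.mem_of_mem_filter a h)
  rw [e2, e3, Finset.card_insert_of_notMem ha', pow_succ]
  ring

lemma sgn_cancel {a b : V} {ρ : Finset V} (hab : a ≠ b) (ha : a ∉ ρ) (hb : b ∉ ρ) :
    SC.sgn (insert a (insert b ρ)) (insert a ρ) * SC.sgn (insert a (insert b ρ)) (insert b ρ)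
      + SC.sgn (insert a ρ) ρ * SC.sgn (insert b ρ) ρ = 0 := by
  rcases hab.lt_or_gt with h | h
  · exact sgn_cancel_lt h ha hb
  · have := sgn_cancel_lt h hb ha
    rw [Finset.insert_comm b a ρ] at this
    linear_combination this

end SCaux
section Entries

open Finset

variable {V : Type} [Fintype V] [DecidableEq V] [LinearOrder V] (X : SC V)

namespace SCaux

lemma card_cofaces (m : ℕ) (τ : Finset V) (hτc : τ.card = m) :
    (Finset.univ.filter fun σ : X.face (m+1) => τ ⊆ σ.1).card = X.deg τ := by
  rw [SC.deg, hτc]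
  refine Finset.card_bij (fun σ _ => σ.1) ?_ ?_ ?_
  · intro σ hσ
    rw [Finset.mem_filter] at hσ ⊢
    exact ⟨σ.2.1, hσ.2, σ.2.2⟩
  · intro σ _ σ' _ h
    exact Subtype.ext h
  · intro η hη
    rw [Finset.mem_filter] at hη
    exact ⟨⟨η, hη.1, hη.2.2⟩, Finset.mem_filter.mpr ⟨Finset.mem_univ _, hη.2.1⟩, rfl⟩

lemma up_diag (m : ℕ) (τ : X.face m) :
    ((X.CB m)ᵀ * X.CB m) τ τ = (X.deg τ.1 : ℝ) := by
  rw [Matrix.mul_apply]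
  simp only [Matrix.transpose_apply, SC.CB]
  rw [show (∑ σ : X.face (m+1), (if τ.1 ⊆ σ.1 then SC.sgn σ.1 τ.1 else 0) *
        (if τ.1 ⊆ σ.1 then SC.sgn σ.1 τ.1 else 0))
      = ∑ σ : X.face (m+1), (if τ.1 ⊆ σ.1 then (1:ℝ) else 0) from ?_]
  · rw [Finset.sum_boole, card_cofaces X m τ.1 τ.2.2]
  · refine Finset.sum_congr rfl fun σ _ => ?_
    split_ifs with h
    · exact sgn_sq h (by rw [σ.2.2, τ.2.2])
    · ring

lemma down_diag (m : ℕ) (τ : X.face (m+1)) :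
    (X.CB m * (X.CB m)ᵀ) τ τ = (m : ℝ) + 1 := by
  rw [Matrix.mul_apply]
  simp only [Matrix.transpose_apply, SC.CB]
  rw [show (∑ ρ : X.face m, (if ρ.1 ⊆ τ.1 then SC.sgn τ.1 ρ.1 else 0) *
        (if ρ.1 ⊆ τ.1 then SC.sgn τ.1 ρ.1 else 0))
      = ∑ ρ : X.face m, (if ρ.1 ⊆ τ.1 then (1:ℝ) else 0) from ?_]
  · rw [Finset.sum_boole]
    have hb : (Finset.univ.filter fun ρ : X.face m => ρ.1 ⊆ τ.1).card
        = (τ.1.powersetCard m).card := by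
      refine Finset.card_bij (fun ρ _ => ρ.1) ?_ ?_ ?_
      · intro ρ hρ
        rw [Finset.mem_filter] at hρ
        exact Finset.mem_powersetCard.mpr ⟨hρ.2, ρ.2.2⟩
      · intro ρ _ ρ' _ h
        exact Subtype.ext h
      · intro s hs
        rw [Finset.mem_powersetCard] at hs
        exact ⟨⟨s, X.down_closed _ τ.2.1 s hs.1, hs.2⟩,
          Finset.mem_filter.mpr ⟨Finset.mem_univ _, hs.1⟩, rfl⟩
    rw [hb, Finset.card_powersetCard, τ.2.2, Nat.choose_succ_self_right]
    push_cast; ring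
  · refine Finset.sum_congr rfl fun ρ _ => ?_
    split_ifs with h
    · exact sgn_sq h (by rw [ρ.2.2, τ.2.2])
    · ring

lemma up_offdiag (m : ℕ) (τ τ' : X.face m) (hne : τ.1 ≠ τ'.1) :
    ((X.CB m)ᵀ * X.CB m) τ τ' =
      if h : (τ.1 ∪ τ'.1) ∈ X.faces ∧ (τ.1 ∪ τ'.1).card = m + 1
      then SC.sgn (τ.1 ∪ τ'.1) τ.1 * SC.sgn (τ.1 ∪ τ'.1) τ'.1 else 0 := by
  have hstrict : m < (τ.1 ∪ τ'.1).card := by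
    have hss : τ.1 ⊂ τ.1 ∪ τ'.1 := by
      refine Finset.ssubset_iff_subset_ne.mpr ⟨Finset.subset_union_left, fun h => ?_⟩
      have : τ'.1 ⊆ τ.1 := h ▸ Finset.subset_union_right
      exact hne (Finset.eq_of_subset_of_card_le this (by rw [τ.2.2, τ'.2.2])).symm
    have := Finset.card_lt_card hss
    rwa [τ.2.2] at this
  rw [Matrix.mul_apply]
  simp only [Matrix.transpose_apply, SC.CB]
  split_ifs with h
  · refine Fintype.sum_eq_single (⟨τ.1 ∪ τ'.1, h.1, h.2⟩ : X.face (m+1)) ?_ |>.trans ?_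
    · intro σ hσ
      by_cases h1 : τ.1 ⊆ σ.1
      · by_cases h2 : τ'.1 ⊆ σ.1
        · exfalso
          apply hσ
          apply Subtype.ext
          exact (Finset.eq_of_subset_of_card_le (Finset.union_subset h1 h2)
            (by rw [σ.2.2, h.2])).symm
        · rw [if_neg h2, mul_zero]
      · rw [if_neg h1, zero_mul]
    · rw [if_pos Finset.subset_union_left, if_pos Finset.subset_union_right]
  · refine Finset.sum_eq_zero fun σ _ => ?_
    by_cases h1 : τ.1 ⊆ σ.1
    · by_cases h2 : τ'.1 ⊆ σ.1
      · exfalso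
        have hsub : τ.1 ∪ τ'.1 ⊆ σ.1 := Finset.union_subset h1 h2
        have hcle : (τ.1 ∪ τ'.1).card ≤ m + 1 := by
          have := Finset.card_le_card hsub
          rw [σ.2.2] at this; exact this
        have hceq : (τ.1 ∪ τ'.1).card = m + 1 := by omega
        have : τ.1 ∪ τ'.1 = σ.1 := Finset.eq_of_subset_of_card_le hsub (by rw [σ.2.2, hceq])
        exact h ⟨this ▸ σ.2.1, hceq⟩
      · rw [if_neg h2, mul_zero]
    · rw [if_neg h1, zero_mul]

lemma down_offdiag (m : ℕ) (τ τ' : X.face (m+1)) (hne : τ.1 ≠ τ'.1) :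
    (X.CB m * (X.CB m)ᵀ) τ τ' =
      if (τ.1 ∩ τ'.1).card = m
      then SC.sgn τ.1 (τ.1 ∩ τ'.1) * SC.sgn τ'.1 (τ.1 ∩ τ'.1) else 0 := by
  have hint : (τ.1 ∩ τ'.1).card ≤ m := by
    have hss : τ.1 ∩ τ'.1 ⊂ τ.1 := by
      refine Finset.ssubset_iff_subset_ne.mpr ⟨Finset.inter_subset_left, fun h => ?_⟩
      have : τ.1 ⊆ τ'.1 := by rw [← h]; exact Finset.inter_subset_right
      exact hne (Finset.eq_of_subset_of_card_le this (by rw [τ.2.2, τ'.2.2]))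
    have := Finset.card_lt_card hss
    rw [τ.2.2] at this; omega
  rw [Matrix.mul_apply]
  simp only [Matrix.transpose_apply, SC.CB]
  split_ifs with h
  · refine Fintype.sum_eq_single
      (⟨τ.1 ∩ τ'.1, X.down_closed _ τ.2.1 _ Finset.inter_subset_left, h⟩ : X.face m) ?_ |>.trans ?_
    · intro ρ hρ
      by_cases h1 : ρ.1 ⊆ τ.1
      · by_cases h2 : ρ.1 ⊆ τ'.1
        · exfalso
          apply hρ
          apply Subtype.ext
          exact Finset.eq_of_subset_of_card_le (Finset.subset_inter h1 h2)
            (by rw [ρ.2.2, h])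
        · rw [if_neg h2, mul_zero]
      · rw [if_neg h1, zero_mul]
    · rw [if_pos Finset.inter_subset_left, if_pos Finset.inter_subset_right]
  · refine Finset.sum_eq_zero fun ρ _ => ?_
    by_cases h1 : ρ.1 ⊆ τ.1
    · by_cases h2 : ρ.1 ⊆ τ'.1
      · exfalso
        have hsub : ρ.1 ⊆ τ.1 ∩ τ'.1 := Finset.subset_inter h1 h2
        have := Finset.card_le_card hsub
        rw [ρ.2.2] at this
        exact h (le_antisymm hint this)
      · rw [if_neg h2, mul_zero]
    · rw [if_neg h1, zero_mul]

end SCaux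

end Entries
section Lap

open Finset

variable {V : Type} [Fintype V] [DecidableEq V] [LinearOrder V] (X : SC V)

namespace SCaux

lemma lap_diag (m : ℕ) (τ : X.face m) : X.Lap m τ τ = (X.deg τ.1 : ℝ) + m := by
  cases m with
  | zero =>
    show ((X.CB 0)ᵀ * X.CB 0) τ τ = _
    rw [up_diag]; push_cast; ring
  | succ m =>
    show ((X.CB (m+1))ᵀ * X.CB (m+1) + X.CB m * (X.CB m)ᵀ) τ τ = _
    rw [Matrix.add_apply, up_diag, down_diag]; push_cast; ring

lemma lap_offdiag_bound (m : ℕ) (τ τ' : X.face m) (hne : τ ≠ τ') :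
    |X.Lap m τ τ'| ≤
      if ((τ.1 ∩ τ'.1).card + 1 = m ∧ (τ.1 ∪ τ'.1) ∉ X.faces) then 1 else 0 := by
  have hne' : τ.1 ≠ τ'.1 := fun h => hne (Subtype.ext h)
  cases m with
  | zero =>
    exfalso
    apply hne'
    rw [Finset.card_eq_zero.mp τ.2.2, Finset.card_eq_zero.mp τ'.2.2]
  | succ m =>
    have hcards : (τ.1 ∪ τ'.1).card + (τ.1 ∩ τ'.1).card = 2 * (m + 1) := by
      rw [Finset.card_union_add_card_inter, τ.2.2, τ'.2.2]; ring
    have hlap : X.Lap (m+1) τ τ' =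
        ((X.CB (m+1))ᵀ * X.CB (m+1)) τ τ' + (X.CB m * (X.CB m)ᵀ) τ τ' := rfl
    have hsub1 : τ.1 ∩ τ'.1 ⊆ τ.1 := Finset.inter_subset_left
    have hsub2 : τ.1 ∩ τ'.1 ⊆ τ'.1 := Finset.inter_subset_right
    by_cases hA : (τ.1 ∩ τ'.1).card = m
    · have hc1 : τ.1.card = (τ.1 ∩ τ'.1).card + 1 := by rw [τ.2.2, hA]
      have hc2 : τ'.1.card = (τ.1 ∩ τ'.1).card + 1 := by rw [τ'.2.2, hA]
      have hU : (τ.1 ∪ τ'.1).card = m + 2 := by omega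
      by_cases hF : (τ.1 ∪ τ'.1) ∈ X.faces
      · -- cancellation
        rw [if_neg (fun h => h.2 hF), hlap, up_offdiag X (m+1) τ τ' hne',
          down_offdiag X m τ τ' hne', dif_pos ⟨hF, hU⟩, if_pos hA]
        obtain ⟨a, ha, hτa⟩ := exists_eq_insert hsub1 hc1
        obtain ⟨b, hb, hτb⟩ := exists_eq_insert hsub2 hc2
        set ρ := τ.1 ∩ τ'.1 with hρ
        have hab : a ≠ b := by
          rintro rfl
          exact hne' (hτa.trans hτb.symm)
        have hun : τ.1 ∪ τ'.1 = insert a (insert b ρ) := by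
          rw [hτa, hτb]
          ext x
          simp only [Finset.mem_union, Finset.mem_insert]
          tauto
        rw [hun, hτa, hτb]
        rw [sgn_cancel hab ha hb, abs_zero]
      · -- adjacent: down term only
        rw [if_pos ⟨by omega, hF⟩, hlap, up_offdiag X (m+1) τ τ' hne',
          down_offdiag X m τ τ' hne', dif_neg (fun h => hF h.1), if_pos hA, zero_add,
          abs_mul, sgn_abs hsub1 hc1, sgn_abs hsub2 hc2, mul_one]
    · rw [if_neg (by rintro ⟨h1, _⟩; omega), hlap, up_offdiag X (m+1) τ τ' hne',
        down_offdiag X m τ τ' hne', dif_neg (by rintro ⟨_, h2⟩; omega), if_neg hA,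
        add_zero, abs_zero]

end SCaux

end Lap
section Count

open Finset

variable {V : Type} [Fintype V] [DecidableEq V] [LinearOrder V] (X : SC V)

namespace SCaux

omit [Fintype V] [LinearOrder V] in
lemma exists_minimal_nonface : ∀ s : Finset V, s ∉ X.faces →
    ∃ η, η ⊆ s ∧ η ∉ X.faces ∧ ∀ ρ ⊂ η, ρ ∈ X.faces := by
  intro s
  induction s using Finset.strongInduction with
  | _ s ih =>
    intro hs
    by_cases h : ∀ ρ ⊂ s, ρ ∈ X.faces
    · exact ⟨s, Finset.Subset.refl s, hs, h⟩
    · push_neg at h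
      obtain ⟨ρ, hρs, hρ⟩ := h
      obtain ⟨η, h1, h2, h3⟩ := ih ρ hρs hρ
      exact ⟨η, h1.trans hρs.subset, h2, h3⟩

omit [LinearOrder V] in
lemma deg_eq_card (τ : Finset V) :
    X.deg τ = (τᶜ.filter fun v => insert v τ ∈ X.faces).card := by
  rw [SC.deg]
  refine (Finset.card_bij (fun v _ => insert v τ) ?_ ?_ ?_).symm
  · intro v hv
    rw [Finset.mem_filter, Finset.mem_compl] at hv
    exact Finset.mem_filter.mpr ⟨hv.2, Finset.subset_insert _ _,
      by rw [Finset.card_insert_of_notMem hv.1]⟩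
  · intro v hv w hw h
    rw [Finset.mem_filter, Finset.mem_compl] at hv hw
    change insert v τ = insert w τ at h
    rcases Finset.mem_insert.mp (h ▸ Finset.mem_insert_self v τ) with h' | h'
    · exact h'
    · exact absurd h' hv.1
  · intro η hη
    rw [Finset.mem_filter] at hη
    obtain ⟨u, hu, rfl⟩ := exists_eq_insert hη.2.1 hη.2.2
    exact ⟨u, Finset.mem_filter.mpr ⟨Finset.mem_compl.mpr hu, hη.1⟩, rfl⟩

/-- Fiber bound: the number of adjacent faces `τ'` with `τ' \ τ = {v}` is at most `d`. -/
lemma fiber_bound (m d : ℕ) (hmiss : X.MissingBnd d) (τ : X.face m) (v : V)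
    (hv : v ∉ τ.1) (hnf : insert v τ.1 ∉ X.faces) :
    ((Finset.univ.filter fun τ' : X.face m =>
        ((τ.1 ∩ τ'.1).card + 1 = m ∧ (τ.1 ∪ τ'.1) ∉ X.faces)).filter
      fun τ' => τ'.1 \ τ.1 = {v}).card ≤ d := by
  obtain ⟨η, hηsub, hηnf, hηmin⟩ := exists_minimal_nonface X (insert v τ.1) hnf
  have hηcard : η.card ≤ d + 1 := hmiss η hηnf hηmin
  have hvη : v ∈ η := by
    by_contra hvη
    refine hηnf (X.down_closed _ τ.2.1 η fun x hx => ?_)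
    rcases Finset.mem_insert.mp (hηsub hx) with rfl | h
    · exact absurd hx hvη
    · exact h
  -- key structural fact about members of the fiber
  have key : ∀ τ' : X.face m, ((τ.1 ∩ τ'.1).card + 1 = m ∧ (τ.1 ∪ τ'.1) ∉ X.faces) →
      τ'.1 \ τ.1 = {v} → ∃ u, τ.1 \ τ'.1 = {u} ∧ u ∈ η.erase v ∧
        τ'.1 = (insert v τ.1).erase u := by
    intro τ' ⟨hA, hU⟩ hf
    have hι : (τ.1 \ τ'.1).card = 1 := by
      have h1 := Finset.card_sdiff_add_card_inter τ.1 τ'.1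
      rw [τ.2.2] at h1
      omega
    obtain ⟨u, hu⟩ := Finset.card_eq_one.mp hι
    have huτ : u ∈ τ.1 := (Finset.mem_sdiff.mp (hu ▸ Finset.mem_singleton_self u)).1
    have huτ' : u ∉ τ'.1 := (Finset.mem_sdiff.mp (hu ▸ Finset.mem_singleton_self u)).2
    have hvτ' : v ∈ τ'.1 := (Finset.mem_sdiff.mp
      (hf ▸ Finset.mem_singleton_self v : v ∈ τ'.1 \ τ.1)).1
    have huv : u ≠ v := fun h => hv (h ▸ huτ)
    have hτ'sub : τ'.1 ⊆ insert v τ.1 := by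
      intro x hx
      by_cases hxτ : x ∈ τ.1
      · exact Finset.mem_insert_of_mem hxτ
      · have : x ∈ τ'.1 \ τ.1 := Finset.mem_sdiff.mpr ⟨hx, hxτ⟩
        rw [hf, Finset.mem_singleton] at this
        exact this ▸ Finset.mem_insert_self v τ.1
    have hτ'eq : τ'.1 = (insert v τ.1).erase u := by
      apply Finset.eq_of_subset_of_card_le
      · intro x hx
        exact Finset.mem_erase.mpr ⟨fun h => huτ' (h ▸ hx), hτ'sub hx⟩
      · rw [Finset.card_erase_of_mem (Finset.mem_insert_of_mem huτ),
          Finset.card_insert_of_notMem hv, τ.2.2, τ'.2.2]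
        omega
    have huη : u ∈ η := by
      by_contra huη
      refine (X.down_closed _ τ'.2.1 η fun x hx => ?_) |> hηnf
      rw [hτ'eq]
      exact Finset.mem_erase.mpr ⟨fun h => huη (h ▸ hx), hηsub hx⟩
    exact ⟨u, hu, Finset.mem_erase.mpr ⟨huv, huη⟩, hτ'eq⟩
  -- inject the fiber into η.erase v
  have hmin : ∀ (s : Finset V) (hs : s.Nonempty) (u : V), s = {u} → s.min' hs = u := by
    rintro s hs u rfl
    exact Finset.min'_singleton u
  have hinj : ((Finset.univ.filter fun τ' : X.face m =>
        ((τ.1 ∩ τ'.1).card + 1 = m ∧ (τ.1 ∪ τ'.1) ∉ X.faces)).filter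
      fun τ' => τ'.1 \ τ.1 = {v}).card ≤ (η.erase v).card := by
    refine Finset.card_le_card_of_injOn
      (fun τ' => if h : (τ.1 \ τ'.1).Nonempty then (τ.1 \ τ'.1).min' h else v) ?_ ?_
    · intro τ' hτ'
      rw [Finset.mem_coe, Finset.mem_filter, Finset.mem_filter] at hτ'
      obtain ⟨u, hu, huη, -⟩ := key τ' hτ'.1.2 hτ'.2
      dsimp only
      rw [dif_pos (hu ▸ Finset.singleton_nonempty u), hmin _ _ u hu]
      exact huη
    · intro τ'₁ h₁ τ'₂ h₂ heq
      rw [Finset.coe_filter, Set.mem_setOf_eq] at h₁ h₂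
      rw [Finset.mem_filter] at h₁ h₂
      obtain ⟨u₁, hu₁, -, he₁⟩ := key τ'₁ h₁.1.2 h₁.2
      obtain ⟨u₂, hu₂, -, he₂⟩ := key τ'₂ h₂.1.2 h₂.2
      dsimp only at heq
      rw [dif_pos (hu₁ ▸ Finset.singleton_nonempty u₁),
        dif_pos (hu₂ ▸ Finset.singleton_nonempty u₂),
        hmin _ _ u₁ hu₁, hmin _ _ u₂ hu₂] at heq
      apply Subtype.ext
      rw [he₁, he₂, heq]
  refine hinj.trans ?_
  rw [Finset.card_erase_of_mem hvη]
  omega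

end SCaux

end Count

section Main

open Finset

namespace SCaux

variable {V : Type} [Fintype V] [DecidableEq V] [LinearOrder V] (X : SC V)

lemma adj_count (m d : ℕ) (hmiss : X.MissingBnd d) (τ : X.face m) :
    (Finset.univ.filter fun τ' : X.face m =>
        ((τ.1 ∩ τ'.1).card + 1 = m ∧ (τ.1 ∪ τ'.1) ∉ X.faces)).card
      ≤ d * (τ.1ᶜ.filter fun v => insert v τ.1 ∉ X.faces).card := by
  classical
  set s := Finset.univ.filter fun τ' : X.face m =>
      ((τ.1 ∩ τ'.1).card + 1 = m ∧ (τ.1 ∪ τ'.1) ∉ X.faces) with hs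
  set B := τ.1ᶜ.filter fun v => insert v τ.1 ∉ X.faces with hB
  set t := B.image (fun v => ({v} : Finset V)) with ht
  have hunion : ∀ τ' : X.face m, ∀ v : V, τ'.1 \ τ.1 = {v} →
      τ.1 ∪ τ'.1 = insert v τ.1 := by
    intro τ' v hv
    rw [← Finset.union_sdiff_self_eq_union, hv]; ext x; simp [or_comm]
  have H : ∀ τ' ∈ s, (fun τ' : X.face m => τ'.1 \ τ.1) τ' ∈ t := by
    intro τ' hτ'
    rw [hs, Finset.mem_filter] at hτ'
    obtain ⟨-, hA, hU⟩ := hτ'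
    have hc : (τ'.1 \ τ.1).card = 1 := by
      have h1 := Finset.card_sdiff_add_card_inter τ'.1 τ.1
      rw [τ'.2.2, Finset.inter_comm] at h1
      omega
    obtain ⟨v, hv⟩ := Finset.card_eq_one.mp hc
    have hvB : v ∈ B := by
      have hv' : v ∈ τ'.1 \ τ.1 := hv ▸ Finset.mem_singleton_self v
      rw [hB, Finset.mem_filter, Finset.mem_compl]
      refine ⟨(Finset.mem_sdiff.mp hv').2, ?_⟩
      rw [← hunion τ' v hv]
      exact hU
    exact Finset.mem_image.mpr ⟨v, hvB, hv.symm⟩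
  rw [Finset.card_eq_sum_card_fiberwise H]
  have hbnd : ∀ b ∈ t, (s.filter fun τ' : X.face m => τ'.1 \ τ.1 = b).card ≤ d := by
    intro b hb
    obtain ⟨v, hvB, rfl⟩ := Finset.mem_image.mp hb
    rw [hB, Finset.mem_filter, Finset.mem_compl] at hvB
    exact fiber_bound X m d hmiss τ v hvB.1 hvB.2
  calc ∑ b ∈ t, (s.filter fun τ' : X.face m => τ'.1 \ τ.1 = b).card
      ≤ ∑ _b ∈ t, d := Finset.sum_le_sum hbnd
    _ = t.card * d := by rw [Finset.sum_const, smul_eq_mul]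
    _ ≤ B.card * d := Nat.mul_le_mul_right d Finset.card_image_le
    _ = d * B.card := Nat.mul_comm _ _

end SCaux

end Main

/-- For a simplicial complex `X` on a vertex set of size `n` all of
whose missing faces have dimension at most `d`, every eigenvalue `μ` of the reduced
`k`-Laplacian (`k = m - 1 ≥ -1`) satisfies `μ ≥ (d+1)(δ_k + k + 1) - d·n`. -/
theorem spectral_gap_lower_bound {V : Type} [Fintype V] [DecidableEq V] [LinearOrder V]
    (X : SC V) (hvert : ∀ v : V, {v} ∈ X.faces) (d : ℕ) (hmiss : X.MissingBnd d)
    (m δ : ℕ) (hδ : IsLeast (X.degSet m) δ) (μ : ℝ) (hμ : μ ∈ X.eigenvals m) :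
    ((d : ℝ) + 1) * ((δ : ℝ) + m) - (d : ℝ) * (Fintype.card V : ℝ) ≤ μ := by
  classical
  obtain ⟨τ, hball⟩ := eigenvalue_mem_ball hμ
  rw [Metric.mem_closedBall, Real.dist_eq] at hball
  have hdiag := SCaux.lap_diag X m τ
  have hdeg : δ ≤ X.deg τ.1 := hδ.2 ⟨τ.1, τ.2.1, τ.2.2, rfl⟩
  set B := τ.1ᶜ.filter fun v => insert v τ.1 ∉ X.faces with hB
  -- row sum bound
  have hrow : (∑ j ∈ Finset.univ.erase τ, ‖X.Lap m τ j‖) ≤ (d : ℝ) * B.card := by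
    calc ∑ j ∈ Finset.univ.erase τ, ‖X.Lap m τ j‖
        ≤ ∑ j ∈ Finset.univ.erase τ,
            (if ((τ.1 ∩ j.1).card + 1 = m ∧ (τ.1 ∪ j.1) ∉ X.faces) then (1:ℝ) else 0) := by
          refine Finset.sum_le_sum fun j hj => ?_
          rw [Real.norm_eq_abs]
          exact SCaux.lap_offdiag_bound X m τ j (Finset.mem_erase.mp hj).1.symm
      _ ≤ ∑ j : X.face m,
            (if ((τ.1 ∩ j.1).card + 1 = m ∧ (τ.1 ∪ j.1) ∉ X.faces) then (1:ℝ) else 0) := by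
          refine Finset.sum_le_sum_of_subset_of_nonneg (Finset.subset_univ _) ?_
          intro j _ _
          split <;> norm_num
      _ = ((Finset.univ.filter fun τ' : X.face m =>
            ((τ.1 ∩ τ'.1).card + 1 = m ∧ (τ.1 ∪ τ'.1) ∉ X.faces)).card : ℝ) := by
          rw [Finset.sum_boole]
      _ ≤ (d : ℝ) * B.card := by
          have := SCaux.adj_count X m d hmiss τ
          exact_mod_cast this
  -- degree/complement count
  have hmn : m ≤ Fintype.card V := by
    rw [← τ.2.2]
    exact (Finset.card_le_univ τ.1).trans_eq (Finset.card_univ)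
  have hBc : (X.deg τ.1 : ℝ) + (B.card : ℝ) = (Fintype.card V : ℝ) - m := by
    have h2 := Finset.card_filter_add_card_filter_not
      (s := τ.1ᶜ) (p := fun v => insert v τ.1 ∈ X.faces)
    have h3 : τ.1ᶜ.card = Fintype.card V - m := by rw [Finset.card_compl, τ.2.2]
    rw [SCaux.deg_eq_card X τ.1, hB]
    rw [h3] at h2
    rw [← Nat.cast_add, h2, Nat.cast_sub hmn]
  -- assemble
  have hball' : X.Lap m τ τ - (∑ j ∈ Finset.univ.erase τ, ‖X.Lap m τ j‖) ≤ μ := by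
    have := abs_le.mp hball
    linarith [this.1]
  rw [hdiag] at hball'
  have hδ' : (δ : ℝ) ≤ (X.deg τ.1 : ℝ) := by exact_mod_cast hdeg
  have hd0 : (0:ℝ) ≤ (d:ℝ) + 1 := by positivity
  nlinarith [mul_nonneg hd0 (sub_nonneg.mpr hδ'), hrow, hBc, hball']
end

section
/- Let X be a simplicial complex on n vertices all of whose missing faces have dimension at most d. Then the reduced k-th cohomology of X with real coefficients vanishes for every k > (d/(d+1))·n − 1. -/
open Matrix BigOperators

set_option linter.unusedSectionVars false

namespace SC
variable {V : Type} [Fintype V] [DecidableEq V] [LinearOrder V]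

/-- extend a cochain by zero to all of `Finset V` -/
def hatt (Y : SC V) (m : ℕ) (φ : Y.face m → ℝ) (ρ : Finset V) : ℝ :=
  if h : ρ ∈ Y.faces ∧ ρ.card = m then φ ⟨ρ, h⟩ else 0

lemma sdiff_erase_eq {σ : Finset V} {u : V} (hu : u ∈ σ) : σ \ σ.erase u = {u} := by
  ext x
  simp only [Finset.mem_sdiff, Finset.mem_erase, Finset.mem_singleton]
  constructor
  · rintro ⟨hx, h⟩; by_contra hne; exact h ⟨hne, hx⟩
  · rintro rfl; exact ⟨hu, fun h => h.1 rfl⟩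

lemma sgn_erase {σ : Finset V} {u : V} (hu : u ∈ σ) :
    sgn σ (σ.erase u) = (-1 : ℝ) ^ (σ.filter fun w => w < u).card := by
  rw [sgn, sdiff_erase_eq hu, Finset.sum_singleton]

lemma erase_card_of {σ : Finset V} {m : ℕ} (h : σ.card = m + 1) {u : V} (hu : u ∈ σ) :
    (σ.erase u).card = m := by
  rw [Finset.card_erase_of_mem hu, h]; rfl

lemma filter_eq_image_erase (Y : SC V) (m : ℕ) {σ : Finset V} (hσ : σ ∈ Y.faces)
    (hc : σ.card = m + 1) :
    (Y.faces.filter (fun ρ => ρ.card = m)).filter (fun ρ => ρ ⊆ σ)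
      = σ.image (fun u => σ.erase u) := by
  ext ρ
  simp only [Finset.mem_filter, Finset.mem_image]
  constructor
  · rintro ⟨⟨hρf, hρc⟩, hρs⟩
    have hcard : (σ \ ρ).card = 1 := by
      rw [Finset.card_sdiff_of_subset hρs, hc, hρc]; omega
    obtain ⟨u, hu⟩ := Finset.card_eq_one.mp hcard
    have huσ : u ∈ σ := by
      have : u ∈ σ \ ρ := hu ▸ Finset.mem_singleton_self u
      exact (Finset.mem_sdiff.mp this).1
    refine ⟨u, huσ, ?_⟩
    ext x
    simp only [Finset.mem_erase]
    constructor
    · rintro ⟨hxu, hxσ⟩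
      by_contra hxρ
      have : x ∈ σ \ ρ := Finset.mem_sdiff.mpr ⟨hxσ, hxρ⟩
      rw [hu, Finset.mem_singleton] at this
      exact hxu this
    · intro hxρ
      have hxσ : x ∈ σ := hρs hxρ
      refine ⟨?_, hxσ⟩
      rintro rfl
      have hx : x ∈ σ \ ρ := hu ▸ Finset.mem_singleton_self x
      exact (Finset.mem_sdiff.mp hx).2 hxρ
  · rintro ⟨u, huσ, rfl⟩
    exact ⟨⟨Y.down_closed σ hσ _ (Finset.erase_subset u σ), erase_card_of hc huσ⟩,
      Finset.erase_subset u σ⟩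

lemma CB_apply (Y : SC V) (m : ℕ) (φ : Y.face m → ℝ) (σ : Y.face (m+1)) :
    (Y.CB m).mulVec φ σ =
      ∑ u ∈ σ.1, (-1 : ℝ) ^ (σ.1.filter fun w => w < u).card * Y.hatt m φ (σ.1.erase u) := by
  classical
  set g : Finset V → ℝ := fun ρ => (if ρ ⊆ σ.1 then sgn σ.1 ρ else 0) * Y.hatt m φ ρ with hg
  have h1 : (Y.CB m).mulVec φ σ = ∑ τ : Y.face m, g τ.1 := by
    rw [Matrix.mulVec, dotProduct]
    refine Finset.sum_congr rfl (fun τ _ => ?_)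
    simp [hg, CB, hatt, dif_pos τ.2]
  have h2 : ∑ ρ ∈ Y.faces.filter (fun ρ => ρ.card = m), g ρ = ∑ τ : Y.face m, g τ.1 :=
    Finset.sum_subtype _ (fun ρ => by simp [and_comm]) g
  have h3 : ∑ ρ ∈ (Y.faces.filter (fun ρ => ρ.card = m)).filter (fun ρ => ρ ⊆ σ.1), g ρ
      = ∑ ρ ∈ Y.faces.filter (fun ρ => ρ.card = m), g ρ := by
    refine Finset.sum_filter_of_ne (fun ρ _ hne => ?_)
    by_contra hns
    exact hne (by rw [hg]; simp only [if_neg hns, zero_mul])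
  have h4 : (Y.faces.filter (fun ρ => ρ.card = m)).filter (fun ρ => ρ ⊆ σ.1)
      = σ.1.image (fun u => σ.1.erase u) := filter_eq_image_erase Y m σ.2.1 σ.2.2
  have h5 : ∑ ρ ∈ σ.1.image (fun u => σ.1.erase u), g ρ = ∑ u ∈ σ.1, g (σ.1.erase u) :=
    Finset.sum_image (fun x hx y hy h => (Finset.erase_inj σ.1 hx).mp h)
  rw [h1, ← h2, ← h3, h4, h5]
  refine Finset.sum_congr rfl (fun u hu => ?_)
  rw [hg]
  simp only [if_pos (Finset.erase_subset u σ.1), sgn_erase hu]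

lemma card_filter_erase {σ : Finset V} {v : V} (hv : v ∈ σ) (w : V) :
    (σ.filter (fun x => x < w)).card
      = ((σ.erase v).filter (fun x => x < w)).card + (if v < w then 1 else 0) := by
  rw [Finset.filter_erase]
  by_cases h : v < w
  · have hm : v ∈ σ.filter (fun x => x < w) := Finset.mem_filter.mpr ⟨hv, h⟩
    rw [Finset.card_erase_of_mem hm, if_pos h]
    have h1 : 0 < (σ.filter (fun x => x < w)).card := Finset.card_pos.mpr ⟨v, hm⟩
    omega
  · rw [Finset.erase_eq_of_notMem (s := σ.filter (fun x => x < w)) (a := v)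
      (fun hm => h (Finset.mem_filter.mp hm).2), if_neg h]
    omega

lemma neg_one_pow_erase {σ : Finset V} {v : V} (hv : v ∈ σ) (w : V) :
    ((-1:ℝ)) ^ (((σ.erase v).filter (fun x => x < w)).card)
      = (-1) ^ ((σ.filter (fun x => x < w)).card) * (-1) ^ (if v < w then 1 else 0) := by
  rw [card_filter_erase hv w, pow_add, mul_assoc]
  by_cases h : v < w <;> simp [h]

lemma sign_swap {u v : V} (h : u ≠ v) :
    ((-1:ℝ)) ^ (if u < v then 1 else 0) = -(-1) ^ (if v < u then 1 else 0) := by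
  rcases h.lt_or_gt with h' | h'
  · simp [h', asymm h']
  · simp [h', asymm h']

lemma erase_erase_comm (σ : Finset V) (u v : V) :
    (σ.erase v).erase u = (σ.erase u).erase v := by
  ext x; simp only [Finset.mem_erase]; tauto

lemma hatt_card_ne (Y : SC V) (m : ℕ) (γ : Y.face m → ℝ) {ρ : Finset V}
    (h : ρ.card ≠ m) : Y.hatt m γ ρ = 0 := by
  rw [hatt, dif_neg (fun hc => h hc.2)]

lemma sum_antisymm {s : Finset V} (F : V → V → ℝ)
    (h : ∀ v ∈ s, ∀ u ∈ s, F v u = -F u v) : ∑ v ∈ s, ∑ u ∈ s, F v u = 0 := by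
  have h2 : (∑ v ∈ s, ∑ u ∈ s, F v u) = -∑ v ∈ s, ∑ u ∈ s, F v u := by
    calc (∑ v ∈ s, ∑ u ∈ s, F v u) = ∑ v ∈ s, ∑ u ∈ s, -F u v :=
          Finset.sum_congr rfl (fun v hv => Finset.sum_congr rfl (fun u hu => h v hv u hu))
      _ = -∑ v ∈ s, ∑ u ∈ s, F u v := by
          simp only [Finset.sum_neg_distrib]
      _ = -∑ v ∈ s, ∑ u ∈ s, F v u := by rw [Finset.sum_comm]
  linarith

lemma DD (Y : SC V) (m : ℕ) (γ : Y.face m → ℝ) (σ : Y.face (m+2)) :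
    (Y.CB (m+1)).mulVec ((Y.CB m).mulVec γ) σ = 0 := by
  classical
  rw [CB_apply]
  set f : V → V → ℝ := fun v u =>
    (-1 : ℝ) ^ (σ.1.filter fun w => w < v).card *
      ((-1 : ℝ) ^ ((σ.1.erase v).filter fun w => w < u).card
        * Y.hatt m γ ((σ.1.erase v).erase u)) with hf
  have hdiag : ∀ v, f v v = 0 := by
    intro v
    have : ((σ.1.erase v).erase v).card ≠ m := by
      rw [Finset.erase_idem]
      rcases Finset.card_erase_le (s := σ.1) (a := v) with _
      have h2 := σ.2.2
      have h3 := Finset.card_erase_le (s := σ.1) (a := v)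
      have h4 : σ.1.card - 1 ≤ (σ.1.erase v).card := Finset.pred_card_le_card_erase
      omega
    simp only [hf]
    rw [hatt_card_ne Y m γ this, mul_zero, mul_zero]
  have hterm : ∀ v ∈ σ.1, (-1 : ℝ) ^ (σ.1.filter fun w => w < v).card *
      Y.hatt (m+1) ((Y.CB m).mulVec γ) (σ.1.erase v) = ∑ u ∈ σ.1, f v u := by
    intro v hv
    have hfm : σ.1.erase v ∈ Y.faces ∧ (σ.1.erase v).card = m + 1 :=
      ⟨Y.down_closed _ σ.2.1 _ (Finset.erase_subset v σ.1), erase_card_of σ.2.2 hv⟩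
    rw [hatt, dif_pos hfm, CB_apply, Finset.mul_sum]
    rw [← Finset.add_sum_erase σ.1 (f v) hv, hdiag v, zero_add]
  rw [Finset.sum_congr rfl hterm]
  refine sum_antisymm f (fun v hv u hu => ?_)
  by_cases he : u = v
  · subst he; rw [hdiag]; ring
  · simp only [hf]
    rw [neg_one_pow_erase hv u, neg_one_pow_erase hu v,
      erase_erase_comm σ.1 u v, sign_swap he]
    ring

lemma hatt_eq (Y : SC V) (m : ℕ) (φ : Y.face m → ℝ) {ρ : Finset V}
    (h : ρ ∈ Y.faces ∧ ρ.card = m) : Y.hatt m φ ρ = φ ⟨ρ, h⟩ := dif_pos h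

lemma neg_one_pow_insert {σ : Finset V} {c : V} (hc : c ∉ σ) (u : V) :
    ((-1:ℝ)) ^ (((insert c σ).filter (fun x => x < u)).card)
      = (-1) ^ ((σ.filter (fun x => x < u)).card) * (-1) ^ (if c < u then 1 else 0) := by
  rw [Finset.filter_insert]
  by_cases h : c < u
  · rw [if_pos h, if_pos h,
      Finset.card_insert_of_notMem (fun hm => hc (Finset.mem_filter.mp hm).1), pow_succ]
    ring
  · rw [if_neg h, if_neg h, pow_zero, mul_one]

lemma cone_hvanish (Y : SC V) (c : V) (hc : ∀ σ ∈ Y.faces, insert c σ ∈ Y.faces)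
    (m : ℕ) : Y.Hvanish (m+1) := by
  classical
  intro φ hφ
  set ψ : Y.face m → ℝ := fun τ => if c ∈ τ.1 then 0 else
    (-1 : ℝ) ^ ((τ.1.filter fun x => x < c).card) * Y.hatt (m+1) φ (insert c τ.1) with hψ
  refine ⟨ψ, ?_⟩
  funext σ
  rw [CB_apply]
  have hval : ∀ ρ, ρ ∈ Y.faces → ρ.card = m → Y.hatt m ψ ρ = if c ∈ ρ then 0 else
      (-1 : ℝ) ^ ((ρ.filter fun x => x < c).card) * Y.hatt (m+1) φ (insert c ρ) := by
    intro ρ h1 h2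
    rw [hatt_eq Y m ψ ⟨h1, h2⟩, hψ]
  have herase : ∀ u ∈ σ.1, σ.1.erase u ∈ Y.faces ∧ (σ.1.erase u).card = m :=
    fun u hu => ⟨Y.down_closed _ σ.2.1 _ (Finset.erase_subset u σ.1), erase_card_of σ.2.2 hu⟩
  by_cases hcσ : c ∈ σ.1
  · rw [Finset.sum_eq_single_of_mem c hcσ (fun u hu hne => ?_)]
    · -- the u = c term gives φ σ
      rw [hval _ (herase c hcσ).1 (herase c hcσ).2,
        if_neg (Finset.notMem_erase c σ.1), Finset.insert_erase hcσ]
      have hq : ((σ.1.erase c).filter (fun x => x < c)).card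
          = (σ.1.filter (fun x => x < c)).card := by
        rw [card_filter_erase hcσ c, if_neg (lt_irrefl c)]
        omega
      rw [hq, hatt_eq Y (m+1) φ σ.2, ← mul_assoc, ← pow_add]
      rw [Even.neg_one_pow ⟨(σ.1.filter (fun x => x < c)).card, rfl⟩, one_mul]
    · rw [hval _ (herase u hu).1 (herase u hu).2,
        if_pos (Finset.mem_erase.mpr ⟨Ne.symm hne, hcσ⟩), mul_zero]
  · -- c ∉ σ : use the cocycle condition at insert c σ
    have hσ' : insert c σ.1 ∈ Y.faces := hc _ σ.2.1
    have hcard' : (insert c σ.1).card = (m+1) + 1 := by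
      rw [Finset.card_insert_of_notMem hcσ, σ.2.2]
    have hz := congrFun hφ ⟨insert c σ.1, hσ', hcard'⟩
    rw [CB_apply, Pi.zero_apply, Finset.sum_insert hcσ] at hz
    rw [Finset.erase_insert hcσ] at hz
    have hq : (((insert c σ.1)).filter (fun x => x < c)).card
        = (σ.1.filter (fun x => x < c)).card := by
      rw [Finset.filter_insert, if_neg (lt_irrefl c)]
    rw [hq, hatt_eq Y (m+1) φ σ.2] at hz
    set q := (σ.1.filter (fun x => x < c)).card with hqdef
    -- termwise transformation of the goal sum
    have hterm : ∀ u ∈ σ.1,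
        (-1 : ℝ) ^ (σ.1.filter fun w => w < u).card * Y.hatt m ψ (σ.1.erase u)
        = -(-1 : ℝ) ^ q * ((-1 : ℝ) ^ ((insert c σ.1).filter fun w => w < u).card
            * Y.hatt (m+1) φ ((insert c σ.1).erase u)) := by
      intro u hu
      have hcu : c ≠ u := fun h => hcσ (h ▸ hu)
      rw [hval _ (herase u hu).1 (herase u hu).2,
        if_neg (fun h => hcσ (Finset.mem_of_mem_erase h)),
        Finset.erase_insert_of_ne hcu,
        neg_one_pow_erase hu c, neg_one_pow_insert hcσ u, sign_swap (hcu.symm)]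
      ring
    rw [Finset.sum_congr rfl hterm, ← Finset.mul_sum]
    have : ∑ u ∈ σ.1, ((-1 : ℝ) ^ ((insert c σ.1).filter fun w => w < u).card
        * Y.hatt (m+1) φ ((insert c σ.1).erase u)) = -((-1 : ℝ) ^ q * φ σ) := by
      linarith
    rw [this]
    have h1 : ((-1 : ℝ) ^ q) * ((-1 : ℝ) ^ q) = 1 := by
      rw [← pow_add]; exact Even.neg_one_pow ⟨q, rfl⟩
    calc -(-1 : ℝ) ^ q * -((-1 : ℝ) ^ q * φ σ) = ((-1 : ℝ) ^ q * (-1 : ℝ) ^ q) * φ σ := by ring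
      _ = φ σ := by rw [h1, one_mul]

lemma sc_ext {X Y : SC V} (h : X.faces = Y.faces) : X = Y := by
  cases X; cases Y; simp_all

/-- restriction of a cochain to a subcomplex -/
def resz {X A : SC V} (hA : A.faces ⊆ X.faces) (m : ℕ) (φ : X.face m → ℝ) :
    A.face m → ℝ := fun τ => φ ⟨τ.1, hA τ.2.1, τ.2.2⟩

lemma CB_eq_of {A X : SC V} (m : ℕ) (φA : A.face m → ℝ) (φX : X.face m → ℝ)
    (σA : A.face (m+1)) (σX : X.face (m+1)) (hσ : σA.1 = σX.1)
    (h : ∀ u ∈ σA.1, A.hatt m φA (σA.1.erase u) = X.hatt m φX (σA.1.erase u)) :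
    (A.CB m).mulVec φA σA = (X.CB m).mulVec φX σX := by
  rw [CB_apply, CB_apply, ← hσ]
  exact Finset.sum_congr rfl (fun u hu => by rw [h u hu])

lemma hatt_res {X A : SC V} (hA : A.faces ⊆ X.faces) (m : ℕ) (φ : X.face m → ℝ)
    {σ : Finset V} (hσ : σ ∈ A.faces) {ρ : Finset V} (hρ : ρ ⊆ σ) :
    A.hatt m (resz hA m φ) ρ = X.hatt m φ ρ := by
  by_cases h : ρ ∈ A.faces ∧ ρ.card = m
  · rw [hatt_eq A m _ h, hatt_eq X m φ ⟨hA h.1, h.2⟩]; rfl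
  · rw [hatt, dif_neg h, hatt, dif_neg ?_]
    rintro ⟨h1, h2⟩
    exact h ⟨A.down_closed σ hσ ρ hρ, h2⟩

lemma res_CB {X A : SC V} (hA : A.faces ⊆ X.faces) (m : ℕ) (φ : X.face m → ℝ)
    (σ : A.face (m+1)) :
    (A.CB m).mulVec (resz hA m φ) σ = (X.CB m).mulVec φ ⟨σ.1, hA σ.2.1, σ.2.2⟩ :=
  CB_eq_of m _ φ σ _ rfl
    (fun u _ => hatt_res hA m φ σ.2.1 (Finset.erase_subset u σ.1))

lemma res_cocycle {X A : SC V} (hA : A.faces ⊆ X.faces) (m : ℕ) (φ : X.face m → ℝ)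
    (hφ : (X.CB m).mulVec φ = 0) : (A.CB m).mulVec (resz hA m φ) = 0 := by
  funext σ
  rw [res_CB hA m φ σ, hφ]; rfl

/-- The Mayer–Vietoris gluing chase. -/
lemma chase (X A B C : SC V) (k : ℕ)
    (hA : A.faces ⊆ X.faces) (hB : B.faces ⊆ X.faces)
    (hunion : ∀ σ ∈ X.faces, σ ∈ A.faces ∨ σ ∈ B.faces)
    (hCA : C.faces ⊆ A.faces) (hCB : C.faces ⊆ B.faces)
    (hcap : ∀ σ, σ ∈ A.faces → σ ∈ B.faces → σ ∈ C.faces)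
    (hvA : A.Hvanish (k+1)) (hvB : B.Hvanish (k+1)) (hvC : C.Hvanish k) :
    X.Hvanish (k+1) := by
  classical
  intro φ hφ
  obtain ⟨α, hα⟩ := hvA _ (res_cocycle hA (k+1) φ hφ)
  obtain ⟨β, hβ⟩ := hvB _ (res_cocycle hB (k+1) φ hφ)
  -- the difference on C is a cocycle
  set γ' : C.face k → ℝ := fun τ => resz hCA k α τ - resz hCB k β τ with hγ'def
  have hγ'c : (C.CB k).mulVec γ' = 0 := by
    funext σ
    have e1 : (C.CB k).mulVec (resz hCA k α) σ = (A.CB k).mulVec α ⟨σ.1, hCA σ.2.1, σ.2.2⟩ :=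
      CB_eq_of k _ α σ _ rfl (fun u _ => hatt_res hCA k α σ.2.1 (Finset.erase_subset u σ.1))
    have e2 : (C.CB k).mulVec (resz hCB k β) σ = (B.CB k).mulVec β ⟨σ.1, hCB σ.2.1, σ.2.2⟩ :=
      CB_eq_of k _ β σ _ rfl (fun u _ => hatt_res hCB k β σ.2.1 (Finset.erase_subset u σ.1))
    have : γ' = resz hCA k α - resz hCB k β := by funext τ; simp [hγ'def]
    rw [this, Matrix.mulVec_sub, Pi.sub_apply, e1, e2, hα, hβ]
    show resz hA (k+1) φ _ - resz hB (k+1) φ _ = 0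
    rw [resz, resz, sub_eq_zero]
  -- produce β' on B agreeing with α on C and still a primitive of φ|B
  obtain ⟨β', hβ'1, hβ'2⟩ :
      ∃ β' : B.face k → ℝ, (B.CB k).mulVec β' = resz hB (k+1) φ ∧
        ∀ τ : C.face k, β' ⟨τ.1, hCB τ.2.1, τ.2.2⟩ = α ⟨τ.1, hCA τ.2.1, τ.2.2⟩ := by
    cases k with
    | zero =>
        have h0 : γ' = 0 := hvC _ hγ'c
        refine ⟨β, hβ, fun τ => ?_⟩
        have := congrFun h0 τ
        simp only [hγ'def, Pi.zero_apply, resz] at this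
        linarith
    | succ k'' =>
        obtain ⟨γ, hγ⟩ := hvC _ hγ'c
        set γt : B.face k'' → ℝ := fun ρ =>
          if h : ρ.1 ∈ C.faces then γ ⟨ρ.1, h, ρ.2.2⟩ else 0 with hγt
        refine ⟨β + (B.CB k'').mulVec γt, ?_, fun τ => ?_⟩
        · rw [Matrix.mulVec_add, hβ]
          have : (B.CB (k''+1)).mulVec ((B.CB k'').mulVec γt) = 0 :=
            funext (fun σ => DD B k'' γt σ)
          rw [this, add_zero]
        · have e3 : (B.CB k'').mulVec γt ⟨τ.1, hCB τ.2.1, τ.2.2⟩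
              = (C.CB k'').mulVec γ τ := by
            refine CB_eq_of k'' γt γ ⟨τ.1, hCB τ.2.1, τ.2.2⟩ τ rfl (fun u hu => ?_)
            have hsub : (τ.1.erase u) ⊆ τ.1 := Finset.erase_subset u τ.1
            by_cases h : τ.1.erase u ∈ C.faces ∧ (τ.1.erase u).card = k''
            · rw [hatt_eq C k'' γ h, hatt_eq B k'' γt ⟨hCB h.1, h.2⟩, hγt]
              simp only [dif_pos h.1]
            · have hCm : τ.1.erase u ∈ C.faces := C.down_closed τ.1 τ.2.1 _ hsub
              have hcard : (τ.1.erase u).card ≠ k'' := fun hcc => h ⟨hCm, hcc⟩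
              rw [hatt_card_ne B k'' γt hcard, hatt_card_ne C k'' γ hcard]
          rw [Pi.add_apply, e3, hγ]
          simp only [hγ'def, resz]
          ring
  -- glue
  set ψ : X.face k → ℝ := fun τ =>
    if h : τ.1 ∈ A.faces then α ⟨τ.1, h, τ.2.2⟩
    else β' ⟨τ.1, (hunion τ.1 τ.2.1).resolve_left h, τ.2.2⟩ with hψ
  refine ⟨ψ, ?_⟩
  funext σ
  by_cases hσA : σ.1 ∈ A.faces
  · have : (X.CB k).mulVec ψ σ = (A.CB k).mulVec α ⟨σ.1, hσA, σ.2.2⟩ := by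
      refine CB_eq_of k ψ α σ ⟨σ.1, hσA, σ.2.2⟩ rfl (fun u hu => ?_)
      have hsub : (σ.1.erase u) ⊆ σ.1 := Finset.erase_subset u σ.1
      have hmA : σ.1.erase u ∈ A.faces := A.down_closed σ.1 hσA _ hsub
      by_cases h : σ.1.erase u ∈ X.faces ∧ (σ.1.erase u).card = k
      · rw [hatt_eq X k ψ h, hatt_eq A k α ⟨hmA, h.2⟩, hψ]
        simp only [dif_pos hmA]
      · have hcard : (σ.1.erase u).card ≠ k := fun hcc => h ⟨hA hmA, hcc⟩
        rw [hatt_card_ne X k ψ hcard, hatt_card_ne A k α hcard]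
    rw [this, hα]
    rfl
  · have hσB : σ.1 ∈ B.faces := (hunion σ.1 σ.2.1).resolve_left hσA
    have : (X.CB k).mulVec ψ σ = (B.CB k).mulVec β' ⟨σ.1, hσB, σ.2.2⟩ := by
      refine CB_eq_of k ψ β' σ ⟨σ.1, hσB, σ.2.2⟩ rfl (fun u hu => ?_)
      have hsub : (σ.1.erase u) ⊆ σ.1 := Finset.erase_subset u σ.1
      have hmB : σ.1.erase u ∈ B.faces := B.down_closed σ.1 hσB _ hsub
      by_cases h : σ.1.erase u ∈ X.faces ∧ (σ.1.erase u).card = k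
      · rw [hatt_eq X k ψ h, hatt_eq B k β' ⟨hmB, h.2⟩, hψ]
        by_cases hmA : σ.1.erase u ∈ A.faces
        · simp only [dif_pos hmA]
          have hmC : σ.1.erase u ∈ C.faces := hcap _ hmA hmB
          exact (hβ'2 ⟨σ.1.erase u, hmC, h.2⟩).symm
        · simp only [dif_neg hmA]
      · have hcard : (σ.1.erase u).card ≠ k := fun hcc => h ⟨hB hmB, hcc⟩
        rw [hatt_card_ne X k ψ hcard, hatt_card_ne B k β' hcard]
    rw [this, hβ'1]
    rfl

/-- deletion of a set of vertices -/
def delS (Y : SC V) (S : Finset V) : SC V where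
  faces := Y.faces.filter (fun σ => ∀ x ∈ S, x ∉ σ)
  empty_mem := Finset.mem_filter.mpr ⟨Y.empty_mem, by simp⟩
  down_closed := by
    intro σ hσ τ hτ
    rw [Finset.mem_filter] at *
    exact ⟨Y.down_closed σ hσ.1 τ hτ, fun x hx hxτ => hσ.2 x hx (hτ hxτ)⟩

/-- the union of the deletions of the vertices of `L`: faces not containing `L` -/
def scU (Y : SC V) (L : Finset V) : SC V where
  faces := Y.faces.filter (fun σ => ¬ L ⊆ σ) ∪ {∅}
  empty_mem := Finset.mem_union_right _ (Finset.mem_singleton_self ∅)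
  down_closed := by
    intro σ hσ τ hτ
    rcases Finset.mem_union.mp hσ with h | h
    · rw [Finset.mem_filter] at h
      by_cases hτL : L ⊆ τ
      · exact absurd (hτL.trans hτ) h.2
      · exact Finset.mem_union_left _ (Finset.mem_filter.mpr ⟨Y.down_closed σ h.1 τ hτ, hτL⟩)
    · rw [Finset.mem_singleton] at h
      subst h
      rw [Finset.subset_empty] at hτ
      subst hτ
      exact Finset.mem_union_right _ (Finset.mem_singleton_self ∅)

lemma mem_delS {Y : SC V} {S σ : Finset V} :
    σ ∈ (delS Y S).faces ↔ σ ∈ Y.faces ∧ ∀ x ∈ S, x ∉ σ := Finset.mem_filter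

lemma mem_scU {Y : SC V} {L σ : Finset V} (hL : L.Nonempty) :
    σ ∈ (scU Y L).faces ↔ σ ∈ Y.faces ∧ ¬ L ⊆ σ := by
  rw [scU, Finset.mem_union, Finset.mem_filter, Finset.mem_singleton]
  constructor
  · rintro (h | rfl)
    · exact h
    · refine ⟨Y.empty_mem, fun hsub => ?_⟩
      obtain ⟨x, hx⟩ := hL
      exact absurd (hsub hx) (Finset.notMem_empty x)
  · exact Or.inl

lemma delS_delS (Y : SC V) (u : V) (S : Finset V) :
    delS (delS Y {u}) S = delS Y (insert u S) := by
  refine sc_ext ?_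
  ext σ
  simp only [mem_delS, Finset.mem_insert, Finset.mem_singleton]
  constructor
  · rintro ⟨⟨h1, h2⟩, h3⟩
    exact ⟨h1, fun x hx => hx.elim (fun hh => hh ▸ h2 u rfl) (h3 x)⟩
  · rintro ⟨h1, h2⟩
    exact ⟨⟨h1, fun x hx => h2 x (Or.inl hx)⟩, fun x hx => h2 x (Or.inr hx)⟩

lemma union_vanish : ∀ (s : ℕ) (Z : SC V) (L : Finset V) (k : ℕ),
    L.card = s → L.Nonempty → L.card ≤ k →
    (∀ S ⊆ L, ∀ j : ℕ, S.card = j + 1 → (delS Z S).Hvanish (k - j)) →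
    (scU Z L).Hvanish k := by
  intro s
  induction s with
  | zero =>
      intro Z L k hcard hne
      exact absurd (Finset.card_eq_zero.mp hcard) (Finset.nonempty_iff_ne_empty.mp hne)
  | succ s ih =>
      intro Z L k hcard hne hk hyp
      obtain ⟨k', rfl⟩ : ∃ k', k = k' + 1 := ⟨k - 1, by omega⟩
      obtain ⟨u, hu⟩ := hne
      by_cases hs : s = 0
      · subst hs
        have hL : L = {u} := by
          obtain ⟨a, ha⟩ := Finset.card_eq_one.mp hcard
          subst ha
          rw [Finset.mem_singleton] at hu
          subst hu; rfl
        subst hL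
        have heq : scU Z {u} = delS Z {u} := by
          refine sc_ext ?_
          ext σ
          rw [mem_scU ⟨u, Finset.mem_singleton_self u⟩, mem_delS]
          simp [Finset.singleton_subset_iff]
        rw [heq]
        have := hyp {u} subset_rfl 0 (Finset.card_singleton u)
        simpa using this
      · set L' := L.erase u with hL'
        have hcard' : L'.card = s := by
          rw [hL', Finset.card_erase_of_mem hu, hcard]; rfl
        have hne' : L'.Nonempty := Finset.card_pos.mp (by omega)
        have hLins : L = insert u L' := by rw [hL', Finset.insert_erase hu]
        -- subset inclusions
        have hA : (delS Z {u}).faces ⊆ (scU Z L).faces := by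
          intro σ hσ
          rw [mem_delS] at hσ
          rw [mem_scU ⟨u, hu⟩]
          exact ⟨hσ.1, fun hsub => hσ.2 u (Finset.mem_singleton_self u) (hsub hu)⟩
        have hB : (scU Z L').faces ⊆ (scU Z L).faces := by
          intro σ hσ
          rw [mem_scU hne'] at hσ
          rw [mem_scU ⟨u, hu⟩]
          exact ⟨hσ.1, fun hsub => hσ.2 ((Finset.erase_subset u L).trans hsub)⟩
        have hunion : ∀ σ ∈ (scU Z L).faces,
            σ ∈ (delS Z {u}).faces ∨ σ ∈ (scU Z L').faces := by
          intro σ hσ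
          rw [mem_scU ⟨u, hu⟩] at hσ
          by_cases huσ : u ∈ σ
          · refine Or.inr ((mem_scU hne').mpr ⟨hσ.1, fun hsub => hσ.2 ?_⟩)
            rw [hLins]
            exact Finset.insert_subset huσ hsub
          · exact Or.inl (mem_delS.mpr ⟨hσ.1, fun x hx =>
              (Finset.mem_singleton.mp hx) ▸ huσ⟩)
        have hCA : (scU (delS Z {u}) L').faces ⊆ (delS Z {u}).faces := by
          intro σ hσ
          exact ((mem_scU hne').mp hσ).1
        have hCB : (scU (delS Z {u}) L').faces ⊆ (scU Z L').faces := by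
          intro σ hσ
          rw [mem_scU hne'] at hσ ⊢
          exact ⟨(mem_delS.mp hσ.1).1, hσ.2⟩
        have hcap : ∀ σ, σ ∈ (delS Z {u}).faces → σ ∈ (scU Z L').faces →
            σ ∈ (scU (delS Z {u}) L').faces := by
          intro σ h1 h2
          rw [mem_scU hne'] at h2 ⊢
          exact ⟨h1, h2.2⟩
        -- the three vanishing hypotheses
        have hvA : (delS Z {u}).Hvanish (k' + 1) := by
          have := hyp {u} (Finset.singleton_subset_iff.mpr hu) 0 (Finset.card_singleton u)
          simpa using this
        have hvB : (scU Z L').Hvanish (k' + 1) := by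
          refine ih Z L' (k' + 1) hcard' hne' (by omega) ?_
          intro S hS j hSj
          exact hyp S (hS.trans (Finset.erase_subset u L)) j hSj
        have hvC : (scU (delS Z {u}) L').Hvanish k' := by
          have hk'pos : 1 ≤ k' := by omega
          refine ih (delS Z {u}) L' k' hcard' hne' (by omega) ?_
          intro S hS j hSj
          rw [delS_delS]
          have huS : u ∉ S := fun h => (Finset.mem_erase.mp (hS h)).1 rfl
          have : (insert u S).card = (j + 1) + 1 := by
            rw [Finset.card_insert_of_notMem huS, hSj]
          have hins : insert u S ⊆ L := by
            rw [hLins]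
            exact Finset.insert_subset_insert u hS
          have hres := hyp (insert u S) hins (j + 1) this
          have : k' + 1 - (j + 1) = k' - j := by omega
          rwa [this] at hres
        exact chase (scU Z L) (delS Z {u}) (scU Z L') (scU (delS Z {u}) L') k'
          hA hB hunion hCA hCB hcap hvA hvB hvC

def presentCard (Y : SC V) : ℕ := (Finset.univ.filter (fun v : V => {v} ∈ Y.faces)).card

lemma vertex_present {Y : SC V} {σ : Finset V} (hσ : σ ∈ Y.faces) {v : V} (hv : v ∈ σ) :
    {v} ∈ Y.faces := Y.down_closed σ hσ {v} (Finset.singleton_subset_iff.mpr hv)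

lemma face_card_le_present {Y : SC V} {σ : Finset V} (hσ : σ ∈ Y.faces) :
    σ.card ≤ presentCard Y :=
  Finset.card_le_card (fun v hv =>
    Finset.mem_filter.mpr ⟨Finset.mem_univ v, vertex_present hσ hv⟩)

lemma presentCard_delS (Y : SC V) (S : Finset V)
    (hS : ∀ v ∈ S, {v} ∈ Y.faces) :
    presentCard (delS Y S) + S.card ≤ presentCard Y := by
  have h1 : Finset.univ.filter (fun v : V => {v} ∈ (delS Y S).faces)
      ⊆ (Finset.univ.filter (fun v : V => {v} ∈ Y.faces)) \ S := by
    intro v hv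
    rw [Finset.mem_filter] at hv
    rw [mem_delS] at hv
    rw [Finset.mem_sdiff, Finset.mem_filter]
    exact ⟨⟨hv.1, hv.2.1⟩, fun hvS => hv.2.2 v hvS (Finset.mem_singleton_self v)⟩
  have h2 : S ⊆ Finset.univ.filter (fun v : V => {v} ∈ Y.faces) := by
    intro v hv
    exact Finset.mem_filter.mpr ⟨Finset.mem_univ v, hS v hv⟩
  have h3 := Finset.card_le_card h1
  rw [Finset.card_sdiff_of_subset h2] at h3
  have h4 := Finset.card_le_card h2
  unfold presentCard
  omega

lemma missing_delS {Y : SC V} {d : ℕ} (h : Y.MissingBnd d) (S : Finset V) :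
    (delS Y S).MissingBnd d := by
  intro σ hσ hmin
  by_cases hint : ∃ x ∈ S, x ∈ σ
  · obtain ⟨x, hxS, hxσ⟩ := hint
    by_cases hcard : σ.card ≤ 1
    · omega
    · exfalso
      have hss : {x} ⊂ σ := by
        rw [Finset.ssubset_iff_subset_ne]
        refine ⟨Finset.singleton_subset_iff.mpr hxσ, fun he => ?_⟩
        rw [← he] at hcard
        simp at hcard
      have := hmin {x} hss
      rw [mem_delS] at this
      exact this.2 x hxS (Finset.mem_singleton_self x)
  · push_neg at hint
    have hσY : σ ∉ Y.faces := by
      intro hY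
      exact hσ (mem_delS.mpr ⟨hY, fun x hx hxσ => hint x hx hxσ⟩)
    refine h σ hσY (fun τ hτ => ?_)
    exact (mem_delS.mp (hmin τ hτ)).1

lemma minimal_nonface (Y : SC V) (σ : Finset V) (hσ : σ ∉ Y.faces) :
    ∃ ρ, ρ ⊆ σ ∧ ρ ∉ Y.faces ∧ ∀ τ ⊂ ρ, τ ∈ Y.faces := by
  induction σ using Finset.strongInduction with
  | _ σ ih =>
    by_cases hall : ∀ τ ⊂ σ, τ ∈ Y.faces
    · exact ⟨σ, subset_rfl, hσ, hall⟩
    · push_neg at hall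
      obtain ⟨τ, hτsub, hτnot⟩ := hall
      obtain ⟨ρ, h1, h2, h3⟩ := ih τ hτsub hτnot
      exact ⟨ρ, h1.trans hτsub.subset, h2, h3⟩

lemma no_missing_cone (Y : SC V)
    (h : ∀ σ, σ ∉ Y.faces → (∀ τ ⊂ σ, τ ∈ Y.faces) → σ.card ≤ 1)
    (c : V) (hc : {c} ∈ Y.faces) : ∀ σ ∈ Y.faces, insert c σ ∈ Y.faces := by
  intro σ hσ
  by_contra hno
  obtain ⟨ρ, hsub, hnot, hmin⟩ := minimal_nonface Y _ hno
  have hρc := h ρ hnot hmin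
  rcases ρ.eq_empty_or_nonempty with rfl | ⟨w, hw⟩
  · exact hnot Y.empty_mem
  · have hρw : ρ = {w} := by
      apply Finset.eq_singleton_iff_unique_mem.mpr
      refine ⟨hw, fun y hy => ?_⟩
      by_contra hne
      have : 2 ≤ ρ.card := Finset.one_lt_card.mpr ⟨y, hy, w, hw, hne⟩
      omega
    subst hρw
    have hwins : w ∈ insert c σ := hsub hw
    rcases Finset.mem_insert.mp hwins with rfl | hwσ
    · exact hnot hc
    · exact hnot (vertex_present hσ hwσ)

lemma face_empty_vanish (Y : SC V) (m : ℕ) (h : ∀ σ ∈ Y.faces, σ.card ≠ m + 1) :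
    Y.Hvanish (m+1) := by
  intro φ _
  exact ⟨0, funext fun σ => (h σ.1 σ.2.1 σ.2.2).elim⟩

lemma main_induction (d : ℕ) : ∀ (P : ℕ) (Y : SC V), presentCard Y ≤ P → Y.MissingBnd d →
    ∀ m : ℕ, d * presentCard Y + 1 ≤ m * (d + 1) → Y.Hvanish m := by
  intro P
  induction P using Nat.strong_induction_on with
  | _ P ihP =>
  intro Y hP hmiss m hcount
  have hm1 : m ≠ 0 := by rintro rfl; rw [zero_mul] at hcount; omega
  obtain ⟨m', rfl⟩ : ∃ m', m = m' + 1 := ⟨m - 1, by omega⟩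
  by_cases hbig : ∃ τ, τ ∉ Y.faces ∧ (∀ ρ ⊂ τ, ρ ∈ Y.faces) ∧ 2 ≤ τ.card
  · obtain ⟨τ, hτnot, hτmin, hτ2⟩ := hbig
    have htd : τ.card ≤ d + 1 := hmiss τ hτnot hτmin
    have hτpres : ∀ v ∈ τ, {v} ∈ Y.faces := by
      intro v hv
      apply hτmin
      rw [Finset.ssubset_iff_subset_ne]
      refine ⟨Finset.singleton_subset_iff.mpr hv, fun he => ?_⟩
      rw [← he] at hτ2
      simp at hτ2
    have hτP : τ.card ≤ presentCard Y :=
      Finset.card_le_card (fun v hv =>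
        Finset.mem_filter.mpr ⟨Finset.mem_univ v, hτpres v hv⟩)
    have hmt : τ.card ≤ m' + 1 := by
      by_contra hlt
      push_neg at hlt
      have h1 : d * (m' + 2) ≤ d * τ.card := Nat.mul_le_mul_left d (by omega)
      have h2 : d * τ.card ≤ d * presentCard Y := Nat.mul_le_mul_left d hτP
      nlinarith [hcount, htd, hlt, h1, h2]
    have hXU : Y = scU Y τ := by
      refine sc_ext ?_
      ext σ
      rw [show (scU Y τ).faces = Y.faces.filter (fun σ => ¬ τ ⊆ σ) ∪ {∅} from rfl]
      rw [Finset.mem_union, Finset.mem_filter, Finset.mem_singleton]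
      constructor
      · intro hσ
        refine Or.inl ⟨hσ, fun hsub => hτnot (Y.down_closed σ hσ τ hsub)⟩
      · rintro (h | rfl)
        · exact h.1
        · exact Y.empty_mem
    rw [hXU]
    refine union_vanish τ.card Y τ (m' + 1) rfl (Finset.card_pos.mp (by omega)) hmt ?_
    intro S hS j hSj
    have hjS : j + 1 ≤ τ.card := hSj ▸ Finset.card_le_card hS
    have hjd : j ≤ d := by omega
    have hjm : j ≤ m' := by omega
    have hSpres : ∀ v ∈ S, {v} ∈ Y.faces := fun v hv => hτpres v (hS hv)
    have hpc := presentCard_delS Y S hSpres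
    rw [hSj] at hpc
    have hPbound : presentCard (delS Y S) ≤ P - (j+1) := by
      have := hτP.trans hP
      omega
    have hlt : P - (j+1) < P := by
      have h1 : j + 1 ≤ P := by omega
      omega
    -- arithmetic for the leaf
    obtain ⟨a, ha⟩ : ∃ a, m' + 1 - j = a ∧ m' + 1 = a + j := by
      exact ⟨m' + 1 - j, rfl, by omega⟩
    rw [ha.1]
    refine ihP (P - (j+1)) hlt (delS Y S) hPbound (missing_delS hmiss S) a ?_
    have h2 : d * (presentCard (delS Y S) + (j + 1)) ≤ d * presentCard Y :=
      Nat.mul_le_mul_left d hpc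
    have hc2 : d * presentCard Y + 1 ≤ (a + j) * (d + 1) := by
      rw [← ha.2]; exact hcount
    nlinarith [h2, hc2, hjd]
  · have hsmall : ∀ σ, σ ∉ Y.faces → (∀ τ ⊂ σ, τ ∈ Y.faces) → σ.card ≤ 1 := by
      intro σ h1 h2
      by_contra hc
      exact hbig ⟨σ, h1, h2, by omega⟩
    by_cases hpres : ∃ c : V, {c} ∈ Y.faces
    · obtain ⟨c, hc⟩ := hpres
      exact cone_hvanish Y c (no_missing_cone Y hsmall c hc) m'
    · push_neg at hpres
      refine face_empty_vanish Y m' (fun σ hσ hcard => ?_)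
      have : σ.Nonempty := Finset.card_pos.mp (by omega)
      obtain ⟨v, hv⟩ := this
      exact hpres v (vertex_present hσ hv)

end SC

/-- If all missing faces of `X` have dimension at most `d`, the reduced
`k`-th cohomology with real coefficients vanishes for every `k > (d/(d+1))·n - 1`
(here `k = m - 1 ≥ -1`). -/
theorem cohomology_vanishing {V : Type} [Fintype V] [DecidableEq V] [LinearOrder V]
    (X : SC V) (hvert : ∀ v : V, {v} ∈ X.faces) (d : ℕ) (hmiss : X.MissingBnd d)
    (m : ℕ) (hm : (m : ℝ) - 1 > (d : ℝ) / ((d : ℝ) + 1) * (Fintype.card V : ℝ) - 1) :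
    X.Hvanish m := by
  have hP : SC.presentCard X = Fintype.card V := by
    unfold SC.presentCard
    rw [Finset.filter_true_of_mem (fun v _ => hvert v), Finset.card_univ]
  have hd : (0:ℝ) < (d:ℝ) + 1 := by positivity
  have hgt : (d:ℝ) * (Fintype.card V : ℝ) < (m:ℝ) * ((d:ℝ)+1) := by
    have h1 : (d:ℝ)/((d:ℝ)+1) * (Fintype.card V : ℝ) < m := by linarith
    calc (d:ℝ) * (Fintype.card V : ℝ)
        = ((d:ℝ)/((d:ℝ)+1) * (Fintype.card V : ℝ)) * ((d:ℝ)+1) := by field_simp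
      _ < (m:ℝ) * ((d:ℝ)+1) := mul_lt_mul_of_pos_right h1 hd
  have hnat : d * Fintype.card V + 1 ≤ m * (d+1) := by
    have hlt : (d * Fintype.card V : ℕ) < m * (d+1) := by exact_mod_cast hgt
    omega
  exact SC.main_induction d (SC.presentCard X) X le_rfl hmiss m (by rw [hP]; exact hnat)
end

section
/- Let X be a simplicial complex on a vertex set V of size n with all missing faces of dimension at most d. Let k ≥ 0 and σ a k-dimensional simplex of X. Then the sum over the k−1 dimensional faces τ of σ of deg_X(τ), minus (k − d + 1)·deg_X(σ), is at most d·n − (d−1)(k+1). -/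
open Matrix BigOperators

section Aux

variable {V : Type} [Fintype V] [DecidableEq V] [LinearOrder V]

/-- The degree of a face counted via the vertices that extend it. -/
lemma deg_eq_card_ext (X : SC V) (τ : Finset V) :
    X.deg τ = (Finset.univ.filter fun v => v ∉ τ ∧ insert v τ ∈ X.faces).card := by
  classical
  unfold SC.deg
  refine (Finset.card_bij (fun v _ => insert v τ) ?_ ?_ ?_).symm
  · intro v hv
    simp only [Finset.mem_filter, Finset.mem_univ, true_and] at hv
    simp only [Finset.mem_filter]
    exact ⟨hv.2, Finset.subset_insert _ _, Finset.card_insert_of_notMem hv.1⟩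
  · intro v hv w hw h
    simp only [Finset.mem_filter, Finset.mem_univ, true_and] at hv hw
    have h' : insert v τ = insert w τ := h
    have : v ∈ insert w τ := by rw [← h']; exact Finset.mem_insert_self v τ
    rcases Finset.mem_insert.1 this with h'' | h''
    · exact h''
    · exact absurd h'' hv.1
  · intro η hη
    simp only [Finset.mem_filter] at hη
    obtain ⟨hf, hsub, hcard⟩ := hη
    have hss : τ ⊂ η := ⟨hsub, fun h => by have := Finset.card_le_card h; omega⟩
    obtain ⟨v, hvη, hvτ⟩ := Finset.exists_of_ssubset hss
    have heq : insert v τ = η := Finset.eq_of_subset_of_card_le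
      (Finset.insert_subset hvη hsub)
      (by rw [Finset.card_insert_of_notMem hvτ, hcard])
    exact ⟨v, by simp [hvτ, heq, hf], heq⟩

/-- Key lemma: if `insert v σ` is not a face, at most `d` of the facets of `σ`
extend to faces together with `v`. -/
lemma key_bound (X : SC V) (d : ℕ) (hmiss : X.MissingBnd d) {σ : Finset V}
    (hσ : σ ∈ X.faces) {v : V} (hv : v ∉ σ) (hins : insert v σ ∉ X.faces) :
    (σ.filter fun u => insert v (σ.erase u) ∈ X.faces).card ≤ d := by
  classical
  have hne : (((insert v σ).powerset.filter (· ∉ X.faces))).Nonempty :=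
    ⟨insert v σ, by simp [hins]⟩
  obtain ⟨ρ, hρmem, hρmin⟩ := Finset.exists_min_image _ Finset.card hne
  simp only [Finset.mem_filter, Finset.mem_powerset] at hρmem
  obtain ⟨hρsub, hρnot⟩ := hρmem
  have hmin : ∀ τ ⊂ ρ, τ ∈ X.faces := by
    intro τ hτ
    by_contra h
    have := hρmin τ (Finset.mem_filter.2 ⟨Finset.mem_powerset.2 (hτ.subset.trans hρsub), h⟩)
    exact absurd (Finset.card_lt_card hτ) (not_lt.2 this)
  have hρd : ρ.card ≤ d + 1 := hmiss ρ hρnot hmin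
  have hvρ : v ∈ ρ := by
    by_contra h
    refine hρnot (X.down_closed σ hσ ρ ?_)
    intro x hx
    rcases Finset.mem_insert.1 (hρsub hx) with h' | h'
    · exact absurd (h' ▸ hx) h
    · exact h'
  have hsub : (σ.filter fun u => insert v (σ.erase u) ∈ X.faces) ⊆ ρ.erase v := by
    intro u hu
    simp only [Finset.mem_filter] at hu
    obtain ⟨huσ, huf⟩ := hu
    refine Finset.mem_erase.2 ⟨fun h => hv (h ▸ huσ), ?_⟩
    by_contra h
    refine hρnot (X.down_closed _ huf ρ ?_)
    intro x hx
    rcases Finset.mem_insert.1 (hρsub hx) with h' | h'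
    · exact h' ▸ Finset.mem_insert_self _ _
    · exact Finset.mem_insert_of_mem (Finset.mem_erase.2 ⟨fun he => h (he ▸ hx), h'⟩)
  calc (σ.filter fun u => insert v (σ.erase u) ∈ X.faces).card
      ≤ (ρ.erase v).card := Finset.card_le_card hsub
    _ = ρ.card - 1 := Finset.card_erase_of_mem hvρ
    _ ≤ d := by
        have : 1 ≤ ρ.card := Finset.card_pos.2 ⟨v, hvρ⟩
        omega

end Aux

/-- Degree-sum inequality: for a `k`-simplex `σ` of a complex with all
missing faces of dimension at most `d`,
`Σ_{τ ∈ σ(k-1)} deg(τ) - (k - d + 1)·deg(σ) ≤ d·n - (d-1)(k+1)`. -/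
theorem sum_degrees_bound {V : Type} [Fintype V] [DecidableEq V] [LinearOrder V]
    (X : SC V) (hvert : ∀ v : V, {v} ∈ X.faces) (d : ℕ) (hmiss : X.MissingBnd d)
    (k : ℕ) (σ : Finset V) (hσ : σ ∈ X.faces) (hcard : σ.card = k + 1) :
    (∑ u ∈ σ, (X.deg (σ.erase u) : ℤ)) - ((k : ℤ) - (d : ℤ) + 1) * (X.deg σ : ℤ)
      ≤ (d : ℤ) * (Fintype.card V : ℤ) - ((d : ℤ) - 1) * ((k : ℤ) + 1) := by
  classical
  set n := Fintype.card V with hn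
  -- double counting: swap the sum
  have hswap : ∑ u ∈ σ, X.deg (σ.erase u) =
      ∑ v : V, (σ.filter fun u => v ∉ σ.erase u ∧ insert v (σ.erase u) ∈ X.faces).card := by
    simp only [deg_eq_card_ext, Finset.card_filter]
    exact Finset.sum_comm
  -- contribution of vertices in σ
  have hinσ : ∀ v ∈ σ,
      (σ.filter fun u => v ∉ σ.erase u ∧ insert v (σ.erase u) ∈ X.faces).card = 1 := by
    intro v hvσ
    have : (σ.filter fun u => v ∉ σ.erase u ∧ insert v (σ.erase u) ∈ X.faces) = {v} := by
      ext u
      simp only [Finset.mem_filter, Finset.mem_singleton, Finset.mem_erase]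
      constructor
      · rintro ⟨huσ, hne, -⟩
        by_contra h
        exact hne ⟨fun he => h he.symm, hvσ⟩
      · rintro rfl
        refine ⟨hvσ, fun h => h.1 rfl, ?_⟩
        rw [Finset.insert_erase hvσ]; exact hσ
    rw [this, Finset.card_singleton]
  -- contribution of vertices outside σ
  have houtσ : ∀ v ∈ σᶜ,
      (σ.filter fun u => v ∉ σ.erase u ∧ insert v (σ.erase u) ∈ X.faces).card ≤
        if insert v σ ∈ X.faces then k + 1 else d := by
    intro v hv
    rw [Finset.mem_compl] at hv
    have hfeq : (σ.filter fun u => v ∉ σ.erase u ∧ insert v (σ.erase u) ∈ X.faces) =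
        (σ.filter fun u => insert v (σ.erase u) ∈ X.faces) := by
      apply Finset.filter_congr
      intro u _
      simp only [Finset.mem_erase, and_iff_right_iff_imp]
      exact fun _ => fun h => hv h.2
    rw [hfeq]
    split_ifs with h
    · calc (σ.filter fun u => insert v (σ.erase u) ∈ X.faces).card
          ≤ σ.card := Finset.card_le_card (Finset.filter_subset _ _)
        _ = k + 1 := hcard
    · exact key_bound X d hmiss hσ hv h
  -- the degree of σ
  have hdegσ : X.deg σ = (σᶜ.filter fun v => insert v σ ∈ X.faces).card := by
    rw [deg_eq_card_ext]
    congr 1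
    ext v
    simp [Finset.mem_compl, and_comm]
  set A : ℕ := (σᶜ.filter fun v => insert v σ ∈ X.faces).card with hA
  set B : ℕ := (σᶜ.filter fun v => ¬ insert v σ ∈ X.faces).card with hB
  have hAB : A + B = n - (k + 1) := by
    rw [hA, hB, Finset.card_filter_add_card_filter_not, Finset.card_compl, hcard]
  have hkn : k + 1 ≤ n := hcard ▸ Finset.card_le_univ σ
  -- sum over σᶜ bound
  have hout : ∑ v ∈ σᶜ,
      (σ.filter fun u => v ∉ σ.erase u ∧ insert v (σ.erase u) ∈ X.faces).card ≤
      (k + 1) * A + d * B := by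
    calc ∑ v ∈ σᶜ, (σ.filter fun u => v ∉ σ.erase u ∧ insert v (σ.erase u) ∈ X.faces).card
        ≤ ∑ v ∈ σᶜ, (if insert v σ ∈ X.faces then k + 1 else d) :=
          Finset.sum_le_sum houtσ
      _ = (k + 1) * A + d * B := by
          rw [Finset.sum_ite, Finset.sum_const, Finset.sum_const, hA, hB]
          ring
  -- total bound in ℕ
  have htotal : ∑ u ∈ σ, X.deg (σ.erase u) ≤ (k + 1) + ((k + 1) * A + d * B) := by
    rw [hswap, ← Finset.sum_add_sum_compl σ]
    have h1 : ∑ v ∈ σ,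
        (σ.filter fun u => v ∉ σ.erase u ∧ insert v (σ.erase u) ∈ X.faces).card = k + 1 := by
      rw [Finset.sum_congr rfl hinσ, Finset.sum_const, hcard, smul_eq_mul, mul_one]
    omega
  -- pass to ℤ
  have htotalZ : (∑ u ∈ σ, (X.deg (σ.erase u) : ℤ)) ≤
      ((k : ℤ) + 1) + (((k : ℤ) + 1) * A + (d : ℤ) * B) := by
    exact_mod_cast htotal
  have hABZ : (A : ℤ) + B = (n : ℤ) - (k + 1) := by
    have := hAB
    omega
  have hdegZ : (X.deg σ : ℤ) = (A : ℤ) := by exact_mod_cast hdegσ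
  rw [hdegZ]
  have hdB : (d : ℤ) * B = (d : ℤ) * ((n : ℤ) - (k + 1)) - (d : ℤ) * A := by
    have : (B : ℤ) = (n : ℤ) - (k + 1) - A := by linarith
    rw [this]; ring
  rw [hdB] at htotalZ
  nlinarith [htotalZ]
end

section
/- Let X be a simplicial complex on vertex set V, k ≥ 0, and σ ∈ X(k). Then Σ_{τ ∈ σ(k−1)} deg_X(τ) = (k+1)(deg_X(σ) + 1) + Σ_{v ∈ V∖σ, v ∉ lk(X,σ)} |{τ ∈ σ(k−1) : v ∈ lk(X,τ)}|. -/
open Matrix BigOperators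

lemma deg_eq_card {V : Type} [Fintype V] [DecidableEq V]
    (X : SC V) (τ : Finset V) :
    X.deg τ = ((Finset.univ \ τ).filter fun v => insert v τ ∈ X.faces).card := by
  unfold SC.deg
  symm
  apply Finset.card_bij (fun v _ => insert v τ)
  · intro v hv
    simp only [Finset.mem_filter, Finset.mem_sdiff, Finset.mem_univ, true_and] at hv ⊢
    exact ⟨hv.2, Finset.subset_insert _ _, Finset.card_insert_of_notMem hv.1⟩
  · intro v hv w hw h
    simp only [Finset.mem_filter, Finset.mem_sdiff, Finset.mem_univ, true_and] at hv hw
    have : v ∈ insert w τ := h ▸ Finset.mem_insert_self v τ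
    rcases Finset.mem_insert.1 this with h' | h'
    · exact h'
    · exact absurd h' hv.1
  · intro η hη
    simp only [Finset.mem_filter] at hη
    obtain ⟨hηf, hsub, hc⟩ := hη
    have hne : (η \ τ).Nonempty := by
      rw [← Finset.card_pos, Finset.card_sdiff_of_subset hsub, hc]; omega
    obtain ⟨v, hv⟩ := hne
    rw [Finset.mem_sdiff] at hv
    refine ⟨v, ?_, ?_⟩
    · simp only [Finset.mem_filter, Finset.mem_sdiff, Finset.mem_univ, true_and]
      have heq : insert v τ = η := by
        apply Finset.eq_of_subset_of_card_le
        · exact Finset.insert_subset hv.1 hsub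
        · rw [hc, Finset.card_insert_of_notMem hv.2]
      exact ⟨hv.2, heq ▸ hηf⟩
    · apply Finset.eq_of_subset_of_card_le
      · exact Finset.insert_subset hv.1 hsub
      · rw [hc, Finset.card_insert_of_notMem hv.2]

/-- Degree-sum identity: for a `k`-simplex `σ`,
`Σ_{τ ∈ σ(k-1)} deg(τ) = (k+1)(deg(σ)+1) + Σ_{v ∈ V∖σ, v ∉ lk(X,σ)} |{τ ∈ σ(k-1) : v ∈ lk(X,τ)}|`. -/
theorem degree_sum_identity {V : Type} [Fintype V] [DecidableEq V] [LinearOrder V]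
    (X : SC V) (k : ℕ) (σ : Finset V) (hσ : σ ∈ X.faces) (hcard : σ.card = k + 1) :
    ∑ u ∈ σ, X.deg (σ.erase u)
      = (k + 1) * (X.deg σ + 1)
        + ∑ v ∈ (Finset.univ \ σ).filter (fun v => insert v σ ∉ X.faces),
            (σ.filter fun u => insert v (σ.erase u) ∈ X.faces).card := by
  have step1 : ∀ u ∈ σ, X.deg (σ.erase u)
      = ((Finset.univ \ σ).filter fun v => insert v (σ.erase u) ∈ X.faces).card + 1 := by
    intro u hu
    rw [deg_eq_card]
    have hset : Finset.univ \ σ.erase u = insert u (Finset.univ \ σ) := by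
      ext x
      simp only [Finset.mem_sdiff, Finset.mem_univ, true_and, Finset.mem_erase,
        Finset.mem_insert]
      by_cases hx : x = u <;> simp [hx]
    rw [hset, Finset.filter_insert]
    rw [Finset.insert_erase hu]
    simp only [hσ, if_true]
    rw [Finset.card_insert_of_notMem]
    simp only [Finset.mem_filter, Finset.mem_sdiff, Finset.mem_univ, true_and]
    intro h
    exact h.1 hu
  rw [Finset.sum_congr rfl step1]
  rw [Finset.sum_add_distrib, Finset.sum_const, hcard, smul_eq_mul, mul_one]
  have swap : ∑ u ∈ σ, ((Finset.univ \ σ).filter fun v => insert v (σ.erase u) ∈ X.faces).card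
      = ∑ v ∈ Finset.univ \ σ, (σ.filter fun u => insert v (σ.erase u) ∈ X.faces).card := by
    simp only [Finset.card_filter]
    exact Finset.sum_comm
  rw [swap]
  rw [← Finset.sum_filter_add_sum_filter_not (Finset.univ \ σ)
    (fun v => insert v σ ∈ X.faces)]
  have h1 : ∑ v ∈ (Finset.univ \ σ).filter (fun v => insert v σ ∈ X.faces),
      (σ.filter fun u => insert v (σ.erase u) ∈ X.faces).card
      = X.deg σ * (k + 1) := by
    have key : ∀ v ∈ (Finset.univ \ σ).filter (fun v => insert v σ ∈ X.faces),
        (σ.filter fun u => insert v (σ.erase u) ∈ X.faces).card = k + 1 := by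
      intro v hv
      simp only [Finset.mem_filter] at hv
      have : σ.filter (fun u => insert v (σ.erase u) ∈ X.faces) = σ := by
        apply Finset.filter_true_of_mem
        intro u hu
        apply X.down_closed _ hv.2
        exact Finset.insert_subset_insert _ (Finset.erase_subset _ _)
      rw [this, hcard]
    rw [Finset.sum_congr rfl key, Finset.sum_const, smul_eq_mul, deg_eq_card]
  have hnot : (Finset.univ \ σ).filter (fun v => ¬ insert v σ ∈ X.faces)
      = (Finset.univ \ σ).filter (fun v => insert v σ ∉ X.faces) := rfl
  rw [h1, hnot]
  ring
end

section
/- Let X be a simplicial complex with all missing faces of dimension at most d, σ ∈ X(k), and v a vertex not in σ with v ∉ lk(X,σ). Then the number of (k−1)-dimensional faces τ of σ such that v ∈ lk(X,τ) is at most d. -/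
open Matrix BigOperators

/-- If all missing faces of `X` have dimension at most `d`, `σ` is a
`k`-simplex, and `v ∉ σ` with `v ∉ lk(X,σ)`, then the number of `(k-1)`-faces `τ` of `σ`
with `v ∈ lk(X,τ)` is at most `d`. -/
theorem link_faces_bound {V : Type} [Fintype V] [DecidableEq V] [LinearOrder V]
    (X : SC V) (d : ℕ) (hmiss : X.MissingBnd d)
    (k : ℕ) (σ : Finset V) (hσ : σ ∈ X.faces) (hcard : σ.card = k + 1)
    (v : V) (hv : v ∉ σ) (hlk : insert v σ ∉ X.faces) :
    (σ.filter fun u => insert v (σ.erase u) ∈ X.faces).card ≤ d := by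
  classical
  -- find a minimal non-face S ⊆ insert v σ
  have hne : ((insert v σ).powerset.filter (· ∉ X.faces)).Nonempty :=
    ⟨insert v σ, by simp [hlk]⟩
  obtain ⟨S, hSmem, hSmin⟩ := Finset.exists_min_image _ Finset.card hne
  rw [Finset.mem_filter, Finset.mem_powerset] at hSmem
  obtain ⟨hSsub, hSnf⟩ := hSmem
  have hminimal : ∀ τ ⊂ S, τ ∈ X.faces := by
    intro τ hτ
    by_contra hτnf
    have := hSmin τ (by
      rw [Finset.mem_filter, Finset.mem_powerset]
      exact ⟨hτ.subset.trans hSsub, hτnf⟩)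
    exact absurd this (by simpa using Finset.card_lt_card hτ)
  have hScard : S.card ≤ d + 1 := hmiss S hSnf hminimal
  have hvS : v ∈ S := by
    by_contra hvS
    have : S ⊆ σ := fun x hx => by
      rcases Finset.mem_insert.1 (hSsub hx) with h | h
      · exact absurd (h ▸ hx) hvS
      · exact h
    exact hSnf (X.down_closed σ hσ S this)
  have hsub : (σ.filter fun u => insert v (σ.erase u) ∈ X.faces) ⊆ S.erase v := by
    intro u hu
    rw [Finset.mem_filter] at hu
    obtain ⟨huσ, huf⟩ := hu
    have huv : u ≠ v := fun h => hv (h ▸ huσ)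
    rw [Finset.mem_erase]
    refine ⟨huv, ?_⟩
    by_contra huS
    apply hSnf
    apply X.down_closed _ huf
    intro x hxS
    rcases Finset.mem_insert.1 (hSsub hxS) with h | h
    · simp [h]
    · exact Finset.mem_insert_of_mem (Finset.mem_erase.2 ⟨fun hxu => huS (hxu ▸ hxS), h⟩)
  calc (σ.filter fun u => insert v (σ.erase u) ∈ X.faces).card
      ≤ (S.erase v).card := Finset.card_le_card hsub
    _ = S.card - 1 := Finset.card_erase_of_mem hvS
    _ ≤ d := by omega
end

section
/- For a k-simplex σ in a finite simplicial complex X with vertex set V, the sum of absolute values of the off-diagonal entries of the reduced k-Laplacian L_k in row σ equals Σ_{τ ∈ σ(k−1)} deg_X(τ) − (k+1)(deg_X(σ) + 1). -/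
set_option maxHeartbeats 1000000
set_option linter.unusedSectionVars false
set_option linter.unusedVariables false


open Matrix BigOperators

namespace SC

variable {V : Type} [Fintype V] [DecidableEq V] [LinearOrder V] (X : SC V)

lemma sgn_insert (τ : Finset V) (u : V) (hu : u ∉ τ) :
    sgn (insert u τ) τ = (-1 : ℝ) ^ (τ.filter fun w => w < u).card := by
  rw [sgn, Finset.insert_sdiff_cancel hu, Finset.sum_singleton, Finset.filter_insert,
    if_neg (lt_irrefl u)]

lemma sgn_cancel (τ : Finset V) (u v : V) (hu : u ∉ τ) (hv : v ∉ τ) (huv : u ≠ v) :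
    sgn (insert u (insert v τ)) (insert u τ) * sgn (insert u (insert v τ)) (insert v τ)
      = - (sgn (insert u τ) τ * sgn (insert v τ) τ) := by
  have h1 : insert u (insert v τ) = insert v (insert u τ) := Finset.insert_comm u v τ
  have hu' : u ∉ insert v τ := by simp [huv, hu]
  have hv' : v ∉ insert u τ := by simp [huv.symm, hv]
  rw [h1, sgn_insert _ v hv', ← h1, sgn_insert _ u hu', sgn_insert _ u hu, sgn_insert _ v hv,
    Finset.filter_insert, Finset.filter_insert]
  rcases lt_or_gt_of_ne huv with h | h
  · rw [if_neg (not_lt.2 h.le), if_pos h, Finset.card_insert_of_notMem (by simp [hu]),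
      pow_succ]
    ring
  · rw [if_pos h, if_neg (not_lt.2 h.le), Finset.card_insert_of_notMem (by simp [hv]),
      pow_succ]
    ring

lemma sgn_abs (τ : Finset V) (u : V) (hu : u ∉ τ) : |sgn (insert u τ) τ| = 1 := by
  rw [sgn_insert _ u hu, abs_pow, abs_neg, abs_one, one_pow]

lemma exists_insert_of_card {s t : Finset V} (hst : s ⊆ t) (h : t.card = s.card + 1) :
    ∃ u, u ∉ s ∧ t = insert u s := by
  have h1 : (t \ s).card = 1 := by rw [Finset.card_sdiff_of_subset hst]; omega
  obtain ⟨u, hu⟩ := Finset.card_eq_one.mp h1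
  have hus : u ∈ t \ s := hu ▸ Finset.mem_singleton_self u
  refine ⟨u, (Finset.mem_sdiff.mp hus).2, ?_⟩
  have := Finset.union_sdiff_of_subset hst
  rw [hu] at this
  rw [← this, Finset.union_comm]
  rfl

lemma card_union_lb {σ η : Finset V} (hc : σ.card = η.card) (hne : σ ≠ η) :
    σ.card + 1 ≤ (σ ∪ η).card := by
  have hss : σ ⊂ σ ∪ η := by
    refine ⟨Finset.subset_union_left, fun hsub => hne ?_⟩
    exact (Finset.eq_of_subset_of_card_le (Finset.union_subset_iff.mp hsub).2 hc.le).symm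
  exact Finset.card_lt_card hss

lemma card_inter_ub {σ η : Finset V} (hc : σ.card = η.card) (hne : σ ≠ η) :
    (σ ∩ η).card + 1 ≤ σ.card := by
  have hss : σ ∩ η ⊂ σ := by
    refine ⟨Finset.inter_subset_left, fun hsub => hne ?_⟩
    have h2 : σ ⊆ η := fun w hw => Finset.mem_inter.mp (hsub hw) |>.2
    exact Finset.eq_of_subset_of_card_le h2 hc.ge
  exact Finset.card_lt_card hss

lemma up_entry (k : ℕ) (σ η : X.face (k+1)) (hne : σ ≠ η) :
    ((X.CB (k+1))ᵀ * X.CB (k+1)) σ η =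
      if σ.1 ∪ η.1 ∈ X.faces ∧ (σ.1 ∪ η.1).card = k+2
        then sgn (σ.1 ∪ η.1) σ.1 * sgn (σ.1 ∪ η.1) η.1 else 0 := by
  have hne' : σ.1 ≠ η.1 := fun h => hne (Subtype.ext h)
  have hub := card_union_lb (σ.2.2.trans η.2.2.symm) hne'
  rw [σ.2.2] at hub
  simp only [Matrix.mul_apply, Matrix.transpose_apply, CB]
  split_ifs with h
  · rw [Fintype.sum_eq_single (⟨σ.1 ∪ η.1, h.1, h.2⟩ : X.face (k+2))]
    · rw [if_pos Finset.subset_union_left, if_pos Finset.subset_union_right]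
    · intro ρ hρ
      by_cases h1 : σ.1 ⊆ ρ.1
      · by_cases h2 : η.1 ⊆ ρ.1
        · exfalso
          apply hρ
          apply Subtype.ext
          exact (Finset.eq_of_subset_of_card_le (Finset.union_subset h1 h2)
            (le_trans (ρ.2.2.le.trans (h.2.ge.trans le_rfl)) le_rfl)).symm
        · rw [if_neg h2, mul_zero]
      · rw [if_neg h1, zero_mul]
  · apply Finset.sum_eq_zero
    intro ρ _
    by_cases h1 : σ.1 ⊆ ρ.1
    · by_cases h2 : η.1 ⊆ ρ.1
      · exfalso
        have hsub : σ.1 ∪ η.1 ⊆ ρ.1 := Finset.union_subset h1 h2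
        have hmem : σ.1 ∪ η.1 ∈ X.faces := X.down_closed ρ.1 ρ.2.1 _ hsub
        have hle : (σ.1 ∪ η.1).card ≤ k + 2 := ρ.2.2 ▸ Finset.card_le_card hsub
        exact h ⟨hmem, le_antisymm hle hub⟩
      · rw [if_neg h2, mul_zero]
    · rw [if_neg h1, zero_mul]

lemma down_entry (k : ℕ) (σ η : X.face (k+1)) (hne : σ ≠ η) :
    (X.CB k * (X.CB k)ᵀ) σ η =
      if (σ.1 ∩ η.1).card = k
        then sgn σ.1 (σ.1 ∩ η.1) * sgn η.1 (σ.1 ∩ η.1) else 0 := by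
  have hne' : σ.1 ≠ η.1 := fun h => hne (Subtype.ext h)
  have hib := card_inter_ub (σ.2.2.trans η.2.2.symm) hne'
  rw [σ.2.2] at hib
  simp only [Matrix.mul_apply, Matrix.transpose_apply, CB]
  split_ifs with h
  · rw [Fintype.sum_eq_single (⟨σ.1 ∩ η.1,
      X.down_closed σ.1 σ.2.1 _ Finset.inter_subset_left, h⟩ : X.face k)]
    · rw [if_pos Finset.inter_subset_left, if_pos Finset.inter_subset_right]
    · intro τ hτ
      by_cases h1 : τ.1 ⊆ σ.1
      · by_cases h2 : τ.1 ⊆ η.1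
        · exfalso
          apply hτ
          apply Subtype.ext
          apply Finset.eq_of_subset_of_card_le (Finset.subset_inter h1 h2)
          rw [h, τ.2.2]
        · rw [if_neg h2, mul_zero]
      · rw [if_neg h1, zero_mul]
  · apply Finset.sum_eq_zero
    intro τ _
    by_cases h1 : τ.1 ⊆ σ.1
    · by_cases h2 : τ.1 ⊆ η.1
      · exfalso
        have hsub : τ.1 ⊆ σ.1 ∩ η.1 := Finset.subset_inter h1 h2
        have := Finset.card_le_card hsub
        rw [τ.2.2] at this
        omega
      · rw [if_neg h2, mul_zero]
    · rw [if_neg h1, zero_mul]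

lemma lap_abs (k : ℕ) (σ η : X.face (k+1)) (hne : σ ≠ η) :
    |X.Lap (k+1) σ η| =
      if (σ.1 ∩ η.1).card = k ∧ σ.1 ∪ η.1 ∉ X.faces then 1 else 0 := by
  have hne' : σ.1 ≠ η.1 := fun h => hne (Subtype.ext h)
  have hcards : (σ.1 ∪ η.1).card + (σ.1 ∩ η.1).card = 2*k + 2 := by
    have := Finset.card_union_add_card_inter σ.1 η.1
    rw [σ.2.2, η.2.2] at this; omega
  have hLap : X.Lap (k+1) σ η =
      ((X.CB (k+1))ᵀ * X.CB (k+1)) σ η + (X.CB k * (X.CB k)ᵀ) σ η := rfl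
  rw [hLap, up_entry X k σ η hne, down_entry X k σ η hne]
  by_cases hc : (σ.1 ∩ η.1).card = k
  · set τ := σ.1 ∩ η.1 with hτ
    obtain ⟨u, hu, hσu⟩ := exists_insert_of_card
      (show τ ⊆ σ.1 from hτ ▸ Finset.inter_subset_left) (by rw [σ.2.2, hc])
    obtain ⟨v, hv, hηv⟩ := exists_insert_of_card
      (show τ ⊆ η.1 from hτ ▸ Finset.inter_subset_right) (by rw [η.2.2, hc])
    have huσ : u ∈ σ.1 := hσu ▸ Finset.mem_insert_self u _
    have huη : u ∉ η.1 := fun h => hu (hτ ▸ Finset.mem_inter.mpr ⟨huσ, h⟩)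
    have hvη : v ∈ η.1 := hηv ▸ Finset.mem_insert_self v _
    have huv : u ≠ v := fun h => huη (h ▸ hvη)
    have hunion : σ.1 ∪ η.1 = insert u (insert v τ) := by
      rw [hσu, hηv, Finset.insert_union, Finset.union_insert, Finset.union_self]
    by_cases hX : σ.1 ∪ η.1 ∈ X.faces
    · have hcu : (σ.1 ∪ η.1).card = k + 2 := by omega
      rw [if_pos ⟨hX, hcu⟩, if_pos hc, if_neg (by simp [hX]), hunion, hσu, hηv,
        sgn_cancel τ u v hu hv huv]
      simp
    · rw [if_neg (by simp [hX]), if_pos hc, if_pos ⟨hc, hX⟩, zero_add, abs_mul,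
        hσu, hηv, sgn_abs _ u hu, sgn_abs _ v hv, mul_one]
  · rw [if_neg hc, if_neg (fun h => hc (by omega)), if_neg (by simp [hc]), add_zero, abs_zero]


lemma sum_deg_erase (k : ℕ) (σ : Finset V) (hσf : σ ∈ X.faces) (hσc : σ.card = k + 1) :
    ∑ u ∈ σ, X.deg (σ.erase u)
      = (X.faces.filter fun η => η.card = k+1 ∧ (σ ∩ η).card = k).card + (k+1) := by
  set E : V → Finset (Finset V) :=
    fun u => (X.faces.filter fun η => σ.erase u ⊆ η ∧ η.card = k+1).erase σ with hE
  have hdeg : ∀ u ∈ σ, X.deg (σ.erase u) = (E u).card + 1 := by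
    intro u hu
    have hc : (σ.erase u).card = k := by rw [Finset.card_erase_of_mem hu]; omega
    have hmem : σ ∈ X.faces.filter fun η => σ.erase u ⊆ η ∧ η.card = k+1 :=
      Finset.mem_filter.mpr ⟨hσf, Finset.erase_subset u σ, hσc⟩
    rw [deg, hc, hE]
    simp only
    rw [Finset.card_erase_of_mem hmem]
    have hpos : 0 < (X.faces.filter fun η => σ.erase u ⊆ η ∧ η.card = k+1).card :=
      Finset.card_pos.mpr ⟨σ, hmem⟩
    omega
  rw [Finset.sum_congr rfl hdeg, Finset.sum_add_distrib, Finset.sum_const, smul_eq_mul,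
    mul_one, hσc]
  congr 1
  have hdisj : ∀ u ∈ σ, ∀ u' ∈ σ, u ≠ u' → Disjoint (E u) (E u') := by
    intro u hu u' hu' hne
    rw [Finset.disjoint_left]
    intro η h1 h2
    rw [hE] at h1 h2
    simp only [Finset.mem_erase, Finset.mem_filter] at h1 h2
    obtain ⟨hη011, hηX, hsub1, hcard1⟩ := h1
    obtain ⟨_, _, hsub2, _⟩ := h2
    apply hη011
    have hσsub : σ ⊆ η := by
      intro w hw
      by_cases hwu : w = u
      · exact hsub2 (Finset.mem_erase.mpr ⟨hwu ▸ hne, hw⟩)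
      · exact hsub1 (Finset.mem_erase.mpr ⟨hwu, hw⟩)
    exact (Finset.eq_of_subset_of_card_le hσsub (by omega)).symm
  rw [← Finset.card_biUnion hdisj]
  congr 1
  ext η
  simp only [Finset.mem_biUnion, hE, Finset.mem_erase, Finset.mem_filter]
  constructor
  · rintro ⟨u, hu, hne, hηX, hsub, hcard⟩
    refine ⟨hηX, hcard, ?_⟩
    have h1 : σ.erase u ⊆ σ ∩ η := Finset.subset_inter (Finset.erase_subset u σ) hsub
    have h2 : (σ.erase u).card = k := by rw [Finset.card_erase_of_mem hu]; omega
    have h3 : (σ ∩ η).card ≤ k + 1 := hσc ▸ Finset.card_le_card Finset.inter_subset_left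
    have h4 : k ≤ (σ ∩ η).card := h2 ▸ Finset.card_le_card h1
    rcases Nat.lt_or_ge (σ ∩ η).card (k+1) with h5 | h5
    · omega
    · exfalso
      have h6 : σ ∩ η = σ := Finset.eq_of_subset_of_card_le Finset.inter_subset_left
        (by omega)
      have h7 : σ ⊆ η := by rw [← h6]; exact Finset.inter_subset_right
      exact hne (Finset.eq_of_subset_of_card_le
        (fun w hw => h7 hw) (by omega)).symm
  · rintro ⟨hηX, hcard, hci⟩
    obtain ⟨u, hu, hσu⟩ := exists_insert_of_card
      (show σ ∩ η ⊆ σ from Finset.inter_subset_left) (by omega)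
    have huσ : u ∈ σ := hσu ▸ Finset.mem_insert_self u _
    have hne : η ≠ σ := by
      intro h
      rw [h, Finset.inter_self, hσc] at hci
      omega
    refine ⟨u, huσ, hne, hηX, ?_, hcard⟩
    have h9 : σ.erase u = σ ∩ η := by
      conv_lhs => rw [hσu]
      rw [Finset.erase_insert hu]
    rw [h9]; exact Finset.inter_subset_right

lemma union_erase (σ ρ : Finset V) (hσρ : σ ⊆ ρ) (u : V) (hu : u ∈ σ) :
    σ ∪ ρ.erase u = ρ := by
  ext w
  simp only [Finset.mem_union, Finset.mem_erase]
  constructor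
  · rintro (h | ⟨_, h⟩)
    · exact hσρ h
    · exact h
  · intro h
    by_cases hwu : w = u
    · exact Or.inl (hwu ▸ hu)
    · exact Or.inr ⟨hwu, h⟩

lemma count_inX (k : ℕ) (σ : Finset V) (hσf : σ ∈ X.faces) (hσc : σ.card = k + 1) :
    (X.faces.filter fun η => η.card = k+1 ∧ (σ ∩ η).card = k ∧ σ ∪ η ∈ X.faces).card
      = (k+1) * X.deg σ := by
  set Cof := X.faces.filter (fun ρ => σ ⊆ ρ ∧ ρ.card = k+2) with hCof
  have hdeg : X.deg σ = Cof.card := by rw [deg, hσc, hCof]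
  have hdisj : ∀ ρ ∈ Cof, ∀ ρ' ∈ Cof, ρ ≠ ρ' →
      Disjoint (σ.image fun u => ρ.erase u) (σ.image fun u => ρ'.erase u) := by
    intro ρ hρ ρ' hρ' hne
    rw [hCof, Finset.mem_filter] at hρ hρ'
    rw [Finset.disjoint_left]
    rintro η h1 h2
    simp only [Finset.mem_image] at h1 h2
    obtain ⟨u, hu, rfl⟩ := h1
    obtain ⟨u', hu', he⟩ := h2
    apply hne
    rw [← union_erase σ ρ hρ.2.1 u hu, ← union_erase σ ρ' hρ'.2.1 u' hu', he]
  have hbij : (X.faces.filter fun η => η.card = k+1 ∧ (σ ∩ η).card = k ∧ σ ∪ η ∈ X.faces)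
      = Cof.biUnion (fun ρ => σ.image fun u => ρ.erase u) := by
    ext η
    simp only [Finset.mem_biUnion, Finset.mem_image, hCof, Finset.mem_filter]
    constructor
    · rintro ⟨hηX, hcard, hci, hUX⟩
      have hcards := Finset.card_union_add_card_inter σ η
      refine ⟨σ ∪ η, ⟨hUX, Finset.subset_union_left, by omega⟩, ?_⟩
      obtain ⟨u, hu, hσu⟩ := exists_insert_of_card
        (show σ ∩ η ⊆ σ from Finset.inter_subset_left) (by omega)
      have huσ : u ∈ σ := hσu ▸ Finset.mem_insert_self u _
      have huη : u ∉ η := fun h => hu (Finset.mem_inter.mpr ⟨huσ, h⟩)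
      refine ⟨u, huσ, ?_⟩
      rw [Finset.erase_union_distrib, hσu, Finset.erase_insert hu,
        Finset.erase_eq_of_notMem huη, Finset.union_eq_right.mpr Finset.inter_subset_right]
    · rintro ⟨ρ, ⟨hρX, hσρ, hρc⟩, u, hu, rfl⟩
      have huρ : u ∈ ρ := hσρ hu
      have hUρ : σ ∪ ρ.erase u = ρ := union_erase σ ρ hσρ u hu
      have hinter : σ ∩ ρ.erase u = σ.erase u := by
        ext w
        simp only [Finset.mem_inter, Finset.mem_erase]
        constructor
        · rintro ⟨h1, h2, _⟩; exact ⟨h2, h1⟩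
        · rintro ⟨h1, h2⟩; exact ⟨h2, h1, hσρ h2⟩
      refine ⟨X.down_closed ρ hρX _ (Finset.erase_subset u ρ), ?_, ?_,
        by rw [hUρ]; exact hρX⟩
      · rw [Finset.card_erase_of_mem huρ]; omega
      · rw [hinter, Finset.card_erase_of_mem hu]; omega
  rw [hbij, Finset.card_biUnion hdisj]
  have himg : ∀ ρ ∈ Cof, (σ.image fun u => ρ.erase u).card = k + 1 := by
    intro ρ hρ
    rw [hCof, Finset.mem_filter] at hρ
    rw [Finset.card_image_of_injOn, hσc]
    intro u hu u' hu' he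
    by_contra hne
    change ρ.erase u = ρ.erase u' at he
    have : u' ∈ ρ.erase u := Finset.mem_erase.mpr ⟨fun h => hne h.symm, hρ.2.1 hu'⟩
    rw [he] at this
    exact (Finset.mem_erase.mp this).1 rfl
  rw [Finset.sum_congr rfl himg, Finset.sum_const, smul_eq_mul, hdeg, mul_comm]


end SC

/-- The sum of absolute values of the off-diagonal entries of the
reduced `k`-Laplacian in row `σ` equals
`Σ_{τ ∈ σ(k-1)} deg(τ) - (k+1)(deg(σ) + 1)` (here `k = m - 1 ≥ 0`). -/
theorem offdiagonal_abs_sum {V : Type} [Fintype V] [DecidableEq V] [LinearOrder V]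
    (X : SC V) (m : ℕ) (hm : 1 ≤ m) (σ : X.face m) :
    ∑ η ∈ Finset.univ.erase σ, |X.Lap m σ η|
      = (∑ u ∈ σ.1, (X.deg (σ.1.erase u) : ℝ)) - (m : ℝ) * ((X.deg σ.1 : ℝ) + 1) := by
  obtain ⟨k, rfl⟩ : ∃ k, m = k + 1 := ⟨m - 1, by omega⟩
  have e1 : ∑ η ∈ Finset.univ.erase σ, |X.Lap (k+1) σ η|
      = ∑ η ∈ Finset.univ.erase σ,
          (if (σ.1 ∩ η.1).card = k ∧ σ.1 ∪ η.1 ∉ X.faces then (1:ℝ) else 0) :=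
    Finset.sum_congr rfl fun η hη =>
      SC.lap_abs X k σ η (Ne.symm (Finset.ne_of_mem_erase hη))
  have e2 : ∑ η ∈ Finset.univ.erase σ,
        (if (σ.1 ∩ η.1).card = k ∧ σ.1 ∪ η.1 ∉ X.faces then (1:ℝ) else 0)
      = ∑ η : X.face (k+1),
          (if (σ.1 ∩ η.1).card = k ∧ σ.1 ∪ η.1 ∉ X.faces then (1:ℝ) else 0) := by
    apply Finset.sum_erase
    rw [if_neg]
    rintro ⟨h, -⟩
    rw [Finset.inter_self, σ.2.2] at h
    omega
  have e3 : ∑ η : X.face (k+1),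
        (if (σ.1 ∩ η.1).card = k ∧ σ.1 ∪ η.1 ∉ X.faces then (1:ℝ) else 0)
      = ∑ η ∈ X.faces.filter (fun η => η.card = k+1),
          (if (σ.1 ∩ η).card = k ∧ σ.1 ∪ η ∉ X.faces then (1:ℝ) else 0) := by
    exact (Finset.sum_subtype (X.faces.filter (fun η => η.card = k+1))
      (fun x => Finset.mem_filter)
      (fun η => if (σ.1 ∩ η).card = k ∧ σ.1 ∪ η ∉ X.faces then (1:ℝ) else 0)).symm
  have e4 : ∑ η ∈ X.faces.filter (fun η => η.card = k+1),
        (if (σ.1 ∩ η).card = k ∧ σ.1 ∪ η ∉ X.faces then (1:ℝ) else 0)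
      = (((X.faces.filter (fun η => η.card = k+1)).filter
          (fun η => (σ.1 ∩ η).card = k ∧ σ.1 ∪ η ∉ X.faces)).card : ℝ) := by
    rw [Finset.sum_boole]
  set A := X.faces.filter (fun η => η.card = k+1 ∧ (σ.1 ∩ η).card = k) with hA
  have hsplitL : (X.faces.filter (fun η => η.card = k+1)).filter
      (fun η => (σ.1 ∩ η).card = k ∧ σ.1 ∪ η ∉ X.faces)
      = A.filter (fun η => σ.1 ∪ η ∉ X.faces) := by
    rw [hA, Finset.filter_filter, Finset.filter_filter]
    congr 1
    ext η
    tauto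
  have hcount : (A.filter (fun η => σ.1 ∪ η ∈ X.faces)).card
      + (A.filter (fun η => ¬ (σ.1 ∪ η ∈ X.faces))).card = A.card :=
    Finset.card_filter_add_card_filter_not _
  have hIn : (A.filter (fun η => σ.1 ∪ η ∈ X.faces)).card = (k+1) * X.deg σ.1 := by
    rw [← X.count_inX k σ.1 σ.2.1 σ.2.2, hA, Finset.filter_filter]
    congr 1
    ext η
    simp only [Finset.mem_filter]
    tauto
  have hSum : ∑ u ∈ σ.1, X.deg (σ.1.erase u) = A.card + (k+1) :=
    X.sum_deg_erase k σ.1 σ.2.1 σ.2.2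
  have hcast : (∑ u ∈ σ.1, (X.deg (σ.1.erase u) : ℝ))
      = ((∑ u ∈ σ.1, X.deg (σ.1.erase u) : ℕ) : ℝ) := by push_cast; rfl
  rw [e1, e2, e3, e4, hsplitL, hcast, hSum]
  have h5 : (A.filter (fun η => σ.1 ∪ η ∉ X.faces)).card + (k+1) * X.deg σ.1 = A.card := by
    rw [hIn] at hcount
    omega
  have h5' := congrArg (Nat.cast : ℕ → ℝ) h5
  push_cast at h5'
  push_cast
  linarith
end

section
/- Let Z = (Δ_d^{(d−1)})^{∗t} ∗ Δ_{r−1}, with n = (d+1)t + r vertices. Then the minimal degree of a k-simplex of Z is δ_k(Z) = n − (k+1) − ⌊(k+1)/d⌋ for −1 ≤ k ≤ dt − 1, and δ_k(Z) = n − (k+1) − t for dt ≤ k ≤ dt + r − 1. -/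
open Matrix BigOperators

section
open Classical

/-- The complex `Z = (Δ_d^{(d-1)})^{∗t} ∗ Δ_{r-1}`: on vertex set
`(Fin t × Fin (d+1)) ⊕ Fin r`, a set is a face iff it misses at least one vertex from
each of the `t` copies of the vertex set of `Δ_d` (no condition on the `Fin r` part). -/
noncomputable def Zcx (d t r : ℕ) : SC ((Fin t × Fin (d + 1)) ⊕ Fin r) where
  faces := Finset.univ.filter fun σ =>
    ∀ i : Fin t,
      (σ.filter fun v => Sum.elim (fun p => p.1 = i) (fun _ => False) v).card ≤ d
  empty_mem := by
    simp only [Finset.mem_filter, Finset.mem_univ, true_and]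
    intro i
    simp
  down_closed := by
    intro σ hσ τ hτ
    simp only [Finset.mem_filter, Finset.mem_univ, true_and] at hσ ⊢
    intro i
    exact le_trans (Finset.card_le_card (Finset.filter_subset_filter _ hτ)) (hσ i)

end

noncomputable instance (d t r : ℕ) : LinearOrder ((Fin t × Fin (d + 1)) ⊕ Fin r) :=
  LinearOrder.lift' (Fintype.equivFin _) (Equiv.injective _)


-- counting in Fin
lemma fin_count (N c : ℕ) :
    ((Finset.univ : Finset (Fin N)).filter fun j : Fin N => (j : ℕ) < c).card = min c N := by
  rw [← Finset.card_range (min c N)]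
  apply Finset.card_bij (fun (j : Fin N) _ => (j : ℕ))
  · intro a ha
    simp only [Finset.mem_filter, Finset.mem_univ, true_and] at ha
    simp [Finset.mem_range, lt_min_iff, ha, a.isLt]
  · intro a _ b _ h; exact Fin.ext h
  · intro b hb
    simp only [Finset.mem_range, lt_min_iff] at hb
    exact ⟨⟨b, hb.2⟩, by simp [hb.1], rfl⟩

lemma fin_count_eq (N c : ℕ) :
    ((Finset.univ : Finset (Fin N)).filter fun j : Fin N => (j : ℕ) = c).card
      = if c < N then 1 else 0 := by
  split_ifs with h
  · rw [Finset.card_eq_one]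
    exact ⟨⟨c, h⟩, by ext j; simp [Fin.ext_iff]⟩
  · rw [Finset.card_eq_zero, Finset.filter_eq_empty_iff]
    intro j _
    intro hj; exact h (hj ▸ j.isLt)

-- generic degree formula
lemma SC.deg_eq {V : Type} [Fintype V] [DecidableEq V] (X : SC V) (σ : Finset V)
    (hσ : σ ∈ X.faces) :
    X.deg σ = ((Finset.univ \ σ).filter fun v => insert v σ ∈ X.faces).card := by
  unfold SC.deg
  symm
  apply Finset.card_bij (fun v _ => insert v σ)
  · intro v hv
    simp only [Finset.mem_filter, Finset.mem_sdiff, Finset.mem_univ, true_and] at hv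
    simp only [Finset.mem_filter]
    exact ⟨hv.2, Finset.subset_insert _ _, Finset.card_insert_of_notMem hv.1⟩
  · intro a ha b hb h
    simp only [Finset.mem_filter, Finset.mem_sdiff, Finset.mem_univ, true_and] at ha hb
    have : a ∈ insert b σ := h ▸ Finset.mem_insert_self a σ
    rcases Finset.mem_insert.1 this with h' | h'
    · exact h'
    · exact absurd h' ha.1
  · intro η hη
    simp only [Finset.mem_filter] at hη
    obtain ⟨hf, hsub, hcard⟩ := hη
    have hne : (η \ σ).Nonempty := by
      rw [← Finset.card_pos, Finset.card_sdiff_of_subset hsub, hcard]; omega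
    obtain ⟨v, hv⟩ := hne
    rw [Finset.mem_sdiff] at hv
    have hins : insert v σ ⊆ η := Finset.insert_subset hv.1 hsub
    have : insert v σ = η := by
      apply Finset.eq_of_subset_of_card_le hins
      rw [hcard, Finset.card_insert_of_notMem hv.2]
    refine ⟨v, ?_, this⟩
    simp only [Finset.mem_filter, Finset.mem_sdiff, Finset.mem_univ, true_and]
    exact ⟨hv.2, this ▸ hf⟩

section ZcxLemmas
open Classical Finset

variable {d t r : ℕ}

/-- vertex type of `Zcx d t r` -/
abbrev Vdtr (d t r : ℕ) := (Fin t × Fin (d + 1)) ⊕ Fin r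

/-- predicate: vertex lies in the `i`-th copy -/
def Pv (i : Fin t) : Vdtr d t r → Prop := Sum.elim (fun p => p.1 = i) (fun _ => False)

/-- number of vertices of `σ` in copy `i` -/
noncomputable def cnt (σ : Finset (Vdtr d t r)) (i : Fin t) : ℕ :=
  (σ.filter fun v => Sum.elim (fun p => p.1 = i) (fun _ => False) v).card

lemma cnt_eq (σ : Finset (Vdtr d t r)) (i : Fin t) :
    cnt σ i = (σ.filter (Pv i)).card := rfl

lemma Pv_unique {i j : Fin t} {v : Vdtr d t r} (hi : Pv i v) (hj : Pv j v) : i = j := by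
  cases v with
  | inl p => exact (hi : p.1 = i) ▸ (hj : p.1 = j)
  | inr x => exact absurd hi (by simp [Pv])

lemma mem_Zcx {σ : Finset (Vdtr d t r)} :
    σ ∈ (Zcx d t r).faces ↔ ∀ i, cnt σ i ≤ d := by
  simp only [Zcx, Finset.mem_filter, Finset.mem_univ, true_and, cnt]

lemma cnt_insert {σ : Finset (Vdtr d t r)} {v : Vdtr d t r} (hv : v ∉ σ) (i : Fin t) :
    cnt (insert v σ) i = cnt σ i + if Pv i v then 1 else 0 := by
  rw [cnt_eq, cnt_eq, Finset.filter_insert]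
  split_ifs with h
  · rw [Finset.card_insert_of_notMem (fun hc => hv (Finset.mem_of_mem_filter _ hc))]
  · rfl

lemma insert_mem_iff {σ : Finset (Vdtr d t r)} (hσ : σ ∈ (Zcx d t r).faces)
    {v : Vdtr d t r} (hv : v ∉ σ) :
    insert v σ ∈ (Zcx d t r).faces ↔ ∀ i, Pv i v → cnt σ i < d := by
  have hc := mem_Zcx.1 hσ
  rw [mem_Zcx]
  constructor
  · intro h i hp
    have := h i
    rw [cnt_insert hv, if_pos hp] at this
    omega
  · intro h i
    rw [cnt_insert hv]
    split_ifs with hp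
    · exact h i hp
    · simpa using hc i

lemma card_Pv (i : Fin t) :
    ((Finset.univ : Finset (Vdtr d t r)).filter (Pv i)).card = d + 1 := by
  have h : ((Finset.univ : Finset (Fin (d+1)))).card
      = ((Finset.univ : Finset (Vdtr d t r)).filter (Pv i)).card := by
    apply Finset.card_bij (fun (j : Fin (d+1)) _ => (Sum.inl (i, j) : Vdtr d t r))
    · intro j _; exact Finset.mem_filter.2 ⟨Finset.mem_univ _, rfl⟩
    · intro a _ b _ h; simpa using h
    · intro v hv
      simp only [Finset.mem_filter, Finset.mem_univ, true_and] at hv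
      cases v with
      | inl p =>
        have : p.1 = i := hv
        exact ⟨p.2, Finset.mem_univ _, by rw [← this]⟩
      | inr x => exact absurd hv (by simp [Pv])
  rw [← h]; simp

/-- number of "full" copies -/
noncomputable def Dcard (σ : Finset (Vdtr d t r)) : ℕ :=
  (Finset.univ.filter fun i : Fin t => cnt σ i = d).card

lemma deg_Zcx {σ : Finset (Vdtr d t r)} (hσ : σ ∈ (Zcx d t r).faces) :
    (Zcx d t r).deg σ = ((d + 1) * t + r - σ.card) - Dcard σ := by
  have hcnt : ∀ i, cnt σ i ≤ d := mem_Zcx.1 hσ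
  rw [SC.deg_eq _ _ hσ]
  have hpart : ((Finset.univ \ σ).filter fun v => insert v σ ∈ (Zcx d t r).faces).card
      + ((Finset.univ \ σ).filter fun v => ¬ insert v σ ∈ (Zcx d t r).faces).card
      = (Finset.univ \ σ : Finset (Vdtr d t r)).card := by
    simpa [Finset.filter_congr_decidable] using
      Finset.card_filter_add_card_filter_not
        (s := Finset.univ \ σ) (p := fun v => insert v σ ∈ (Zcx d t r).faces)
  have hcardU : (Finset.univ \ σ : Finset (Vdtr d t r)).card = (d + 1) * t + r - σ.card := by
    rw [Finset.card_sdiff_of_subset (Finset.subset_univ _), Finset.card_univ]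
    have : Fintype.card (Vdtr d t r) = (d + 1) * t + r := by
      simp [Fintype.card_sum, Fintype.card_prod]; ring
    rw [this]
  have hB : ((Finset.univ \ σ).filter fun v => ¬ insert v σ ∈ (Zcx d t r).faces).card
      = Dcard σ := by
    have hBeq : ((Finset.univ \ σ).filter fun v => ¬ insert v σ ∈ (Zcx d t r).faces)
        = (Finset.univ.filter fun i : Fin t => cnt σ i = d).biUnion
            (fun i => (Finset.univ \ σ).filter (Pv i)) := by
      ext v
      simp only [Finset.mem_filter, Finset.mem_biUnion, Finset.mem_sdiff, Finset.mem_univ,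
        true_and]
      constructor
      · rintro ⟨hv, hni⟩
        rw [insert_mem_iff hσ hv] at hni
        push_neg at hni
        obtain ⟨i, hp, hge⟩ := hni
        exact ⟨i, le_antisymm (hcnt i) hge, hv, hp⟩
      · rintro ⟨i, hi, hv, hp⟩
        refine ⟨hv, ?_⟩
        rw [insert_mem_iff hσ hv]
        push_neg
        exact ⟨i, hp, by omega⟩
    have hdisjD : ∀ i ∈ (Finset.univ.filter fun i : Fin t => cnt σ i = d),
        ∀ j ∈ (Finset.univ.filter fun i : Fin t => cnt σ i = d), i ≠ j →
        Disjoint ((Finset.univ \ σ).filter (Pv i)) ((Finset.univ \ σ).filter (Pv j)) := by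
      intro i _ j _ hij
      rw [Finset.disjoint_left]
      intro v hvi hvj
      exact hij (Pv_unique (Finset.mem_filter.1 hvi).2 (Finset.mem_filter.1 hvj).2)
    have hone : ∀ i ∈ (Finset.univ.filter fun i : Fin t => cnt σ i = d),
        ((Finset.univ \ σ).filter (Pv i)).card = 1 := by
      intro i hi
      have hid : cnt σ i = d := (Finset.mem_filter.1 hi).2
      have hsplit : (Finset.univ \ σ).filter (Pv i)
          = Finset.univ.filter (Pv i) \ σ.filter (Pv i) := by
        ext v
        simp only [Finset.mem_filter, Finset.mem_sdiff, Finset.mem_univ, true_and]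
        tauto
      rw [hsplit, Finset.card_sdiff_of_subset (Finset.filter_subset_filter _ (Finset.subset_univ _)),
        card_Pv, ← cnt_eq, hid]
      omega
    rw [hBeq, Finset.card_biUnion hdisjD, Finset.sum_congr rfl hone, Finset.sum_const,
      smul_eq_mul, mul_one]
    rfl
  rw [hB, hcardU] at hpart
  exact Nat.eq_sub_of_add_eq hpart

lemma Dcard_le_t (σ : Finset (Vdtr d t r)) : Dcard σ ≤ t := by
  calc Dcard σ ≤ (Finset.univ : Finset (Fin t)).card := Finset.card_filter_le _ _
  _ = t := by simp

lemma Dcard_le_div (hd : 0 < d) (σ : Finset (Vdtr d t r)) : Dcard σ ≤ σ.card / d := by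
  rw [Nat.le_div_iff_mul_le hd]
  have hsum : ∑ i : Fin t, cnt σ i ≤ σ.card := by
    have hdisj : ∀ i ∈ (Finset.univ : Finset (Fin t)), ∀ j ∈ Finset.univ, i ≠ j →
        Disjoint (σ.filter (Pv i)) (σ.filter (Pv j)) := by
      intro i _ j _ hij
      rw [Finset.disjoint_left]
      intro v hvi hvj
      exact hij (Pv_unique (Finset.mem_filter.1 hvi).2 (Finset.mem_filter.1 hvj).2)
    calc ∑ i : Fin t, cnt σ i
        = (Finset.univ.biUnion fun i : Fin t => σ.filter (Pv i)).card := by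
          rw [Finset.card_biUnion hdisj]; rfl
      _ ≤ σ.card := Finset.card_le_card (by
          intro v hv
          obtain ⟨i, _, hvi⟩ := Finset.mem_biUnion.1 hv
          exact Finset.mem_of_mem_filter _ hvi)
  calc Dcard σ * d = ∑ i ∈ (Finset.univ.filter fun i : Fin t => cnt σ i = d), d := by
        rw [Finset.sum_const, smul_eq_mul]; rfl
    _ = ∑ i ∈ (Finset.univ.filter fun i : Fin t => cnt σ i = d), cnt σ i :=
        Finset.sum_congr rfl (fun i hi => ((Finset.mem_filter.1 hi).2).symm)
    _ ≤ ∑ i : Fin t, cnt σ i := Finset.sum_le_sum_of_subset (Finset.filter_subset _ _)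
    _ ≤ σ.card := hsum

end ZcxLemmas

section ZcxConstr
open Classical Finset

variable {d t r : ℕ}

lemma fin_count' {N c : ℕ} (p : Fin N → Prop) [DecidablePred p]
    (hp : ∀ j, p j ↔ (j : ℕ) < c) :
    (Finset.univ.filter p).card = min c N := by
  rw [Finset.filter_congr (fun j _ => hp j)]
  exact fin_count N c

lemma fin_count_eq' {N c : ℕ} (p : Fin N → Prop) [DecidablePred p]
    (hp : ∀ j, p j ↔ (j : ℕ) = c) :
    (Finset.univ.filter p).card = if c < N then 1 else 0 := by
  rw [Finset.filter_congr (fun j _ => hp j)]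
  exact fin_count_eq N c

/-- the face with `g i` vertices in copy `i` and `e` vertices on the `Fin r` side -/
noncomputable def sg (d t r : ℕ) (g : Fin t → ℕ) (e : ℕ) : Finset (Vdtr d t r) :=
  Finset.univ.filter (Sum.elim (fun p => (p.2 : ℕ) < g p.1) (fun x => (x : ℕ) < e))

lemma cnt_sg (g : Fin t → ℕ) (e : ℕ) (i : Fin t) :
    cnt (sg d t r g e) i = min (g i) (d + 1) := by
  have h : ((Finset.univ : Finset (Fin (d + 1))).filter fun j : Fin (d + 1) => (j : ℕ) < g i).card
      = cnt (sg d t r g e) i := by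
    apply Finset.card_bij (fun (j : Fin (d + 1)) _ => (Sum.inl (i, j) : Vdtr d t r))
    · intro j hj
      simp only [Finset.mem_filter, Finset.mem_univ, true_and] at hj
      simp only [cnt, sg, Finset.mem_filter, Finset.mem_univ, true_and, Sum.elim_inl]
      exact ⟨hj, trivial⟩
    · intro a _ b _ h; simpa using h
    · intro v hv
      simp only [cnt, sg, Finset.mem_filter, Finset.mem_univ, true_and] at hv
      obtain ⟨hq, hp⟩ := hv
      cases v with
      | inl p =>
        have hpi : p.1 = i := hp
        refine ⟨p.2, ?_, ?_⟩
        · simp only [Finset.mem_filter, Finset.mem_univ, true_and]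
          simpa [hpi] using hq
        · rw [← hpi]
      | inr x => exact absurd hp (by simp)
  rw [← h]
  exact fin_count' _ (fun j => Iff.rfl)

lemma card_sg (g : Fin t → ℕ) (e : ℕ) :
    (sg d t r g e).card = (∑ i : Fin t, min (g i) (d + 1)) + min e r := by
  rw [sg, Finset.card_filter, Fintype.sum_sum_type]
  congr 1
  · rw [Fintype.sum_prod_type]
    refine Finset.sum_congr rfl fun i _ => ?_
    rw [← Finset.card_filter]
    exact fin_count' _ (fun j => by simp)
  · rw [← Finset.card_filter]
    exact fin_count' _ (fun x => by simp)

lemma sg_mem (g : Fin t → ℕ) (e : ℕ) (hg : ∀ i, g i ≤ d) :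
    sg d t r g e ∈ (Zcx d t r).faces := by
  rw [mem_Zcx]
  intro i
  rw [cnt_sg]
  exact le_trans (min_le_left _ _) (hg i)

lemma sum_g_card (q s : ℕ) :
    ∑ i : Fin t, (if (i : ℕ) < q then d else if (i : ℕ) = q then s else 0)
      = d * min q t + s * (if q < t then 1 else 0) := by
  have h : ∀ i : Fin t, (if (i : ℕ) < q then d else if (i : ℕ) = q then s else 0)
      = d * (if (i : ℕ) < q then 1 else 0) + s * (if (i : ℕ) = q then 1 else 0) := by
    intro i; split_ifs <;> omega
  rw [Finset.sum_congr rfl (fun i _ => h i), Finset.sum_add_distrib,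
    ← Finset.mul_sum, ← Finset.mul_sum]
  congr 1
  · congr 1
    rw [Finset.sum_boole]
    push_cast
    exact fin_count' _ (fun j => Iff.rfl)
  · congr 1
    rw [Finset.sum_boole]
    push_cast
    exact fin_count_eq' _ (fun j => Iff.rfl)

end ZcxConstr

/-- Minimal degrees in `Z = (Δ_d^{(d-1)})^{∗t} ∗ Δ_{r-1}` (with
`n = (d+1)t + r` vertices): `δ_k(Z) = n - (k+1) - ⌊(k+1)/d⌋` for `-1 ≤ k ≤ dt - 1`,
and `δ_k(Z) = n - (k+1) - t` for `dt ≤ k ≤ dt + r - 1` (here `m = k + 1`). -/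
theorem Zcx_min_degree (d t r : ℕ) (hd : 0 < d) (m : ℕ) :
    (m ≤ d * t →
      IsLeast ((Zcx d t r).degSet m) ((d + 1) * t + r - m - m / d))
    ∧ (d * t + 1 ≤ m → m ≤ d * t + r →
      IsLeast ((Zcx d t r).degSet m) ((d + 1) * t + r - m - t)) := by
  constructor
  · intro hm
    have h1 : d * (m / d) + m % d = m := Nat.div_add_mod m d
    have hs : m % d < d := Nat.mod_lt _ hd
    have hq : m / d ≤ t := by
      calc m / d ≤ d * t / d := Nat.div_le_div_right hm
        _ = t := Nat.mul_div_cancel_left t hd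
    set q := m / d with hqdef
    set s := m % d with hsdef
    set g : Fin t → ℕ := fun i => if (i : ℕ) < q then d else if (i : ℕ) = q then s else 0
      with hgdef
    have hg : ∀ i, g i ≤ d := fun i => by
      simp only [hgdef]; split_ifs <;> omega
    have hmem : sg d t r g 0 ∈ (Zcx d t r).faces := sg_mem g 0 hg
    have hcard : (sg d t r g 0).card = m := by
      rw [card_sg]
      have hmin : ∀ i : Fin t, min (g i) (d + 1) = g i :=
        fun i => min_eq_left ((hg i).trans (Nat.le_succ d))
      rw [Finset.sum_congr rfl fun i _ => hmin i]
      simp only [hgdef]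
      rw [sum_g_card, min_eq_left hq, min_eq_left (Nat.zero_le r)]
      rcases lt_or_eq_of_le hq with h | h
      · rw [if_pos h]; omega
      · rw [if_neg (by omega)]
        have h2 : d * q = d * t := by rw [h]
        omega
    have hDc : Dcard (sg d t r g 0) = q := by
      unfold Dcard
      have : ((Finset.univ.filter fun i : Fin t => cnt (sg d t r g 0) i = d)).card
          = min q t := by
        refine fin_count' (c := q) _ (fun i => ?_)
        rw [cnt_sg, min_eq_left ((hg i).trans (Nat.le_succ d))]
        simp only [hgdef]
        split_ifs with hlt heq <;> omega
      rw [this, min_eq_left hq]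
    constructor
    · refine ⟨sg d t r g 0, hmem, hcard, ?_⟩
      rw [deg_Zcx hmem, hcard, hDc]
    · rintro N ⟨σ, hσf, hσc, hdeg⟩
      rw [deg_Zcx hσf, hσc] at hdeg
      have hD : Dcard σ ≤ m / d := hσc ▸ Dcard_le_div hd σ
      calc (d + 1) * t + r - m - m / d
          ≤ (d + 1) * t + r - m - Dcard σ := Nat.sub_le_sub_left hD _
        _ = N := hdeg
  · intro hm1 hm2
    set g : Fin t → ℕ := fun _ => d with hgdef
    have hg : ∀ i, g i ≤ d := fun i => le_refl d
    have hmem : sg d t r g (m - d * t) ∈ (Zcx d t r).faces := sg_mem g _ hg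
    have hcomm : t * d = d * t := Nat.mul_comm t d
    have hcard : (sg d t r g (m - d * t)).card = m := by
      rw [card_sg]
      simp only [hgdef]
      rw [min_eq_left (Nat.le_succ d), Finset.sum_const, Finset.card_univ,
        Fintype.card_fin, smul_eq_mul, min_eq_left (by omega : m - d * t ≤ r)]
      omega
    have hDc : Dcard (sg d t r g (m - d * t)) = t := by
      unfold Dcard
      have : ((Finset.univ.filter fun i : Fin t => cnt (sg d t r g (m - d * t)) i = d)).card
          = min t t := by
        refine fin_count' (c := t) _ (fun i => ?_)
        rw [cnt_sg]
        simp only [hgdef]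
        rw [min_eq_left (Nat.le_succ d)]
        simp [i.isLt]
      rw [this, min_self]
    constructor
    · refine ⟨sg d t r g (m - d * t), hmem, hcard, ?_⟩
      rw [deg_Zcx hmem, hcard, hDc]
    · rintro N ⟨σ, hσf, hσc, hdeg⟩
      rw [deg_Zcx hσf, hσc] at hdeg
      calc (d + 1) * t + r - m - t
          ≤ (d + 1) * t + r - m - Dcard σ := Nat.sub_le_sub_left (Dcard_le_t σ) _
        _ = N := hdeg
end
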